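/- arXiv:2002.00999 — 3 statements merged into one kernel-verified Lean document; each statement's English description precedes it below -/
import Mathlib

section
/- Let P be a 3-dimensional polytope, f a generic linear functional, and γ, γ' two f-monotone paths on P with ν(γ, γ') = ν ≥ 1. Then there exist f-monotone paths γ = γ_0, γ_1, ..., γ_ν = γ' on P such that ν(γ_{i-1}, γ_i) = 1 for every i ∈ [ν]. -/
noncomputable section

/-- Points of `ℝ³`. -/
abbrev V3 := EuclideanSpace ℝ (Fin 3)

/-- A 3-dimensional polytope: the convex hull of finitely many points of `ℝ³`
with nonempty interior. -/
def IsPolytope3 (P : Set V3) : Prop :=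
  (∃ S : Finset V3, P = convexHull ℝ (S : Set V3)) ∧ (interior P).Nonempty

/-- A 2-dimensional face of `P`: an exposed face whose affine hull is 2-dimensional. -/
def IsFace2 (P F : Set V3) : Prop :=
  IsExposed ℝ P F ∧ Module.finrank ℝ (vectorSpan ℝ F) = 2

/-- The number `f_2(P)` of 2-dimensional faces of `P`. -/
def f2count (P : Set V3) : ℕ := Nat.card {F : Set V3 // IsFace2 P F}

/-- `a` and `b` are joined by an edge of `P`: they are distinct vertices whose
segment is an exposed face of `P`. -/
def IsEdgePair (P : Set V3) (a b : V3) : Prop :=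
  a ≠ b ∧ a ∈ Set.extremePoints ℝ P ∧ b ∈ Set.extremePoints ℝ P ∧
    IsExposed ℝ P (segment ℝ a b)

/-- A linear functional is generic for `P` if it is injective on the vertices of `P`. -/
def Generic (P : Set V3) (f : V3 →ₗ[ℝ] ℝ) : Prop :=
  Set.InjOn f (Set.extremePoints ℝ P)

/-- The union of the edges of a path, presented as a list of vertices. -/
def edgeUnion (l : List V3) : Set V3 :=
  ⋃ p ∈ l.zip l.tail, segment ℝ p.1 p.2

/-- An `f`-monotone path on `P`: a nonempty list of vertices of `P`, consecutive ones
joined by edges of `P` along which `f` strictly increases, starting at the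
`f`-minimizing vertex and ending at the `f`-maximizing vertex. -/
def IsMonotonePath (P : Set V3) (f : V3 →ₗ[ℝ] ℝ) (l : List V3) : Prop :=
  l ≠ [] ∧ (∀ v ∈ l, v ∈ Set.extremePoints ℝ P) ∧
    l.Chain' (fun a b => IsEdgePair P a b ∧ f a < f b) ∧
    ∀ v ∈ Set.extremePoints ℝ P, f l.head! ≤ f v ∧ f v ≤ f l.getLast!

/-- The set of values `t ∈ f(P)` at which `γ` and `γ'` disagree on the fiber
`f⁻¹(t) ∩ P`. -/
def disagreeSet (P : Set V3) (f : V3 →ₗ[ℝ] ℝ) (γ γ' : List V3) : Set ℝ :=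
  {t | t ∈ ⇑f '' P ∧
    ⇑f ⁻¹' {t} ∩ P ∩ edgeUnion γ ≠ ⇑f ⁻¹' {t} ∩ P ∩ edgeUnion γ'}

/-- `ν(γ, γ')`: the number of connected components of the set of values `t ∈ f(P)`
at which `γ` and `γ'` disagree on the fiber `f⁻¹(t) ∩ P`. -/
def nu (P : Set V3) (f : V3 →ₗ[ℝ] ℝ) (γ γ' : List V3) : ℕ :=
  Nat.card (ConnectedComponents (disagreeSet P f γ γ'))

/-- `γ` and `γ'` differ by a polygon flip: they differ exactly by replacing one of the
two `f`-monotone arcs of the boundary of a 2-dimensional face `F` of `P` by the other. -/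
def IsFlip (P : Set V3) (f : V3 →ₗ[ℝ] ℝ) (γ γ' : List V3) : Prop :=
  ∃ F : Set V3, IsFace2 P F ∧ ∃ pre suf a a' : List V3,
    γ = pre ++ a ++ suf ∧ γ' = pre ++ a' ++ suf ∧ a ≠ a' ∧
    (∀ v ∈ a, v ∈ F) ∧ (∀ v ∈ a', v ∈ F) ∧
    ∀ v ∈ Set.extremePoints ℝ F, v ∈ a ∨ v ∈ a'

/-- The monotone path graph `G(P, f)`: nodes are the `f`-monotone paths on `P`,
two being adjacent if they differ by a polygon flip. -/
def MPG (P : Set V3) (f : V3 →ₗ[ℝ] ℝ) :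
    SimpleGraph {l : List V3 // IsMonotonePath P f l} :=
  SimpleGraph.fromRel fun x y => IsFlip P f x.1 y.1


open Set List


namespace NuAux

variable {f : V3 →ₗ[ℝ] ℝ}

lemma f_mem_segment {a b x : V3} (h : x ∈ segment ℝ a b) (hab : f a ≤ f b) :
    f x ∈ Set.Icc (f a) (f b) := by
  have := Set.mem_image_of_mem f h
  rw [← f.coe_toAffineMap, image_segment, f.coe_toAffineMap] at this
  rwa [segment_eq_Icc hab] at this

lemma segment_injOn_f {a b : V3} (hab : f a ≠ f b) : Set.InjOn f (segment ℝ a b) := by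
  intro x hx y hy hxy
  rw [segment_eq_image'] at hx hy
  obtain ⟨θ, hθ, rfl⟩ := hx
  obtain ⟨η, hη, rfl⟩ := hy
  simp only [map_add, map_smul, smul_eq_mul, map_sub] at hxy
  have : θ = η := by
    have h1 : f b - f a ≠ 0 := sub_ne_zero.2 (Ne.symm hab)
    field_simp at hxy
    exact mul_right_cancel₀ h1 (by linarith)
  rw [this]

lemma exists_mem_segment_f_eq {a b : V3} {t : ℝ} (hab : f a < f b)
    (h1 : f a ≤ t) (h2 : t ≤ f b) : ∃ x ∈ segment ℝ a b, f x = t := by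
  refine ⟨a + ((t - f a) / (f b - f a)) • (b - a), ?_, ?_⟩
  · rw [segment_eq_image']
    refine ⟨(t - f a) / (f b - f a), ⟨div_nonneg (by linarith) (by linarith), ?_⟩, rfl⟩
    rw [div_le_one (by linarith)]; linarith
  · simp only [map_add, map_smul, smul_eq_mul, map_sub]
    rw [div_mul_eq_mul_div, mul_div_assoc, div_self (by linarith), mul_one]
    ring

lemma edgeUnion_nil : edgeUnion [] = ∅ := by simp [edgeUnion]

lemma edgeUnion_single (a : V3) : edgeUnion [a] = ∅ := by simp [edgeUnion]

lemma edgeUnion_cons_cons (a b : V3) (l : List V3) :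
    edgeUnion (a :: b :: l) = segment ℝ a b ∪ edgeUnion (b :: l) := by
  simp [edgeUnion, List.zip_cons_cons]

lemma mem_edgeUnion_iff {x : V3} {l : List V3} :
    x ∈ edgeUnion l ↔ ∃ l₁ a b l₂, l = l₁ ++ a :: b :: l₂ ∧ x ∈ segment ℝ a b := by
  induction l with
  | nil => simp [edgeUnion_nil]
  | cons c l ih =>
    cases l with
    | nil =>
      simp only [edgeUnion_single, Set.mem_empty_iff_false, false_iff]
      rintro ⟨l₁, a, b, l₂, h, -⟩
      rcases l₁ with _ | ⟨u, l₁⟩ <;> simp_all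
    | cons d l =>
      rw [edgeUnion_cons_cons, Set.mem_union, ih]
      constructor
      · rintro (hx | ⟨l₁, a, b, l₂, h, hx⟩)
        · exact ⟨[], c, d, l, rfl, hx⟩
        · exact ⟨c :: l₁, a, b, l₂, by rw [h]; rfl, hx⟩
      · rintro ⟨l₁, a, b, l₂, h, hx⟩
        rcases l₁ with _ | ⟨u, l₁⟩
        · simp only [List.nil_append, List.cons.injEq] at h
          obtain ⟨rfl, h⟩ := h
          obtain ⟨rfl, rfl⟩ : d = b ∧ l = l₂ := by
            simpa using h
          exact Or.inl hx
        · simp only [List.cons_append, List.cons.injEq] at h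
          exact Or.inr ⟨l₁, a, b, l₂, h.2, hx⟩

lemma segment_subset_edgeUnion {a b : V3} {l₁ l₂ : List V3} :
    segment ℝ a b ⊆ edgeUnion (l₁ ++ a :: b :: l₂) := fun x hx =>
  mem_edgeUnion_iff.2 ⟨l₁, a, b, l₂, rfl, hx⟩

lemma edgeUnion_append (v : V3) (l₁ l₂ : List V3) :
    edgeUnion (l₁ ++ v :: l₂) = edgeUnion (l₁ ++ [v]) ∪ edgeUnion (v :: l₂) := by
  induction l₁ with
  | nil => simp [edgeUnion_single]
  | cons a l₁ ih =>
    cases l₁ with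
    | nil =>
      simp only [List.nil_append, List.cons_append] at *
      rw [edgeUnion_cons_cons, edgeUnion_cons_cons]
      simp [edgeUnion_single, Set.union_assoc]
    | cons b l₁ =>
      simp only [List.cons_append] at *
      rw [edgeUnion_cons_cons, ih, edgeUnion_cons_cons, Set.union_assoc]

end NuAux

namespace NuAux

variable {f : V3 →ₗ[ℝ] ℝ}

local notation "R" => (fun a b : V3 => f a < f b)

lemma pairwise_adj {l₁ l₂ : List V3} {a b : V3} (hp : (l₁ ++ a :: b :: l₂).Pairwise R) :
    f a < f b := by
  have := (List.pairwise_append.1 hp).2.1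
  exact (List.pairwise_cons.1 this).1 b (by simp)

lemma lb_edgeUnion {v : V3} {l : List V3} (hp : (v :: l).Pairwise R)
    {x : V3} (hx : x ∈ edgeUnion (v :: l)) : f v ≤ f x ∧ (f x = f v → x = v) := by
  obtain ⟨l₁, a, b, l₂, h, hxs⟩ := mem_edgeUnion_iff.1 hx
  have hab : f a < f b := pairwise_adj (h ▸ hp)
  have hfx := f_mem_segment hxs hab.le
  cases l₁ with
  | nil =>
    simp only [List.nil_append, List.cons.injEq] at h
    rw [h.1]
    exact ⟨hfx.1, fun he => segment_injOn_f hab.ne hxs (left_mem_segment ℝ a b) he⟩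
  | cons u l₁ =>
    simp only [List.cons_append, List.cons.injEq] at h
    obtain ⟨rfl, h⟩ := h
    have hva : f v < f a := by
      have := List.pairwise_cons.1 hp
      exact this.1 a (by rw [h]; simp)
    exact ⟨le_of_lt (lt_of_lt_of_le hva hfx.1), fun he => absurd he (by
      have := lt_of_lt_of_le hva hfx.1; exact ne_of_gt this)⟩

lemma ub_edgeUnion {v : V3} {l : List V3} (hp : (l ++ [v]).Pairwise R)
    {x : V3} (hx : x ∈ edgeUnion (l ++ [v])) : f x ≤ f v ∧ (f x = f v → x = v) := by
  obtain ⟨l₁, a, b, l₂, h, hxs⟩ := mem_edgeUnion_iff.1 hx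
  have hab : f a < f b := pairwise_adj (h ▸ hp)
  have hfx := f_mem_segment hxs hab.le
  rcases List.eq_nil_or_concat l₂ with rfl | ⟨m, w, rfl⟩
  · have h2 : (l₁ ++ [a]) ++ [b] = l ++ [v] := by simpa using h.symm
    obtain ⟨-, hbv⟩ := List.append_inj' h2 rfl
    obtain rfl : b = v := by simpa using hbv
    refine ⟨hfx.2, fun he => ?_⟩
    exact segment_injOn_f hab.ne hxs (right_mem_segment ℝ a b) he
  · have h2 : (l₁ ++ a :: b :: m) ++ [w] = l ++ [v] := by simpa using h.symm
    have hwv : w = v := by simpa using (List.append_inj' h2 rfl).2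
    have hbv : f b < f v := by
      have h3 := (List.pairwise_append.1 (h ▸ hp)).2.1
      have h4 := (List.pairwise_cons.1 h3).2
      have h5 : f b < f w := (List.pairwise_cons.1 h4).1 w (by simp)
      rwa [hwv] at h5
    have := lt_of_le_of_lt hfx.2 hbv
    exact ⟨this.le, fun he => absurd he (ne_of_lt this)⟩

lemma pairwise_prefix {l₁ l₂ : List V3} {v : V3} (hp : (l₁ ++ v :: l₂).Pairwise R) :
    (l₁ ++ [v]).Pairwise R :=
  hp.sublist (by simpa using (List.prefix_append (l₁ ++ [v]) l₂).sublist)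

lemma pairwise_suffix {l₁ l₂ : List V3} {v : V3} (hp : (l₁ ++ v :: l₂).Pairwise R) :
    (v :: l₂).Pairwise R :=
  hp.sublist (List.sublist_append_right l₁ (v :: l₂))

lemma fib_lt {l₁ l₂ : List V3} {v : V3} {t : ℝ} (hp : (l₁ ++ v :: l₂).Pairwise R)
    (ht : t < f v) :
    ⇑f ⁻¹' {t} ∩ edgeUnion (l₁ ++ v :: l₂) = ⇑f ⁻¹' {t} ∩ edgeUnion (l₁ ++ [v]) := by
  rw [edgeUnion_append, Set.inter_union_distrib_left]
  have : ⇑f ⁻¹' {t} ∩ edgeUnion (v :: l₂) = ∅ := by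
    ext x
    simp only [Set.mem_inter_iff, Set.mem_preimage, Set.mem_singleton_iff,
      Set.mem_empty_iff_false, iff_false, not_and]
    intro hfx hx
    exact absurd ((lb_edgeUnion (pairwise_suffix hp) hx).1.trans hfx.le) (not_le.2 ht)
  rw [this, Set.union_empty]

lemma fib_gt {l₁ l₂ : List V3} {v : V3} {t : ℝ} (hp : (l₁ ++ v :: l₂).Pairwise R)
    (ht : f v < t) :
    ⇑f ⁻¹' {t} ∩ edgeUnion (l₁ ++ v :: l₂) = ⇑f ⁻¹' {t} ∩ edgeUnion (v :: l₂) := by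
  rw [edgeUnion_append, Set.inter_union_distrib_left]
  have : ⇑f ⁻¹' {t} ∩ edgeUnion (l₁ ++ [v]) = ∅ := by
    ext x
    simp only [Set.mem_inter_iff, Set.mem_preimage, Set.mem_singleton_iff,
      Set.mem_empty_iff_false, iff_false, not_and]
    intro hfx hx
    have := (ub_edgeUnion (pairwise_prefix hp) hx).1
    rw [hfx] at this
    exact absurd this (not_le.2 ht)
  rw [this, Set.empty_union]

lemma fib_vertex {l₁ l₂ : List V3} {v : V3} (hp : (l₁ ++ v :: l₂).Pairwise R)
    (hne : l₁ ≠ [] ∨ l₂ ≠ []) :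
    ⇑f ⁻¹' {f v} ∩ edgeUnion (l₁ ++ v :: l₂) = {v} := by
  apply Set.Subset.antisymm
  · intro x hx
    rw [edgeUnion_append] at hx
    obtain ⟨hfx, hx | hx⟩ := hx
    · exact (ub_edgeUnion (pairwise_prefix hp) hx).2 hfx
    · exact (lb_edgeUnion (pairwise_suffix hp) hx).2 hfx
  · intro x hx
    obtain rfl : x = v := hx
    refine ⟨rfl, ?_⟩
    rcases hne with hne | hne
    · obtain ⟨m, u, rfl⟩ := List.eq_nil_or_concat l₁ |>.resolve_left hne
      have hcc : m.concat u ++ x :: l₂ = m ++ u :: x :: l₂ := by simp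
      rw [hcc]
      exact segment_subset_edgeUnion (right_mem_segment ℝ u x)
    · obtain ⟨w, l₂, rfl⟩ := List.exists_cons_of_ne_nil hne
      exact segment_subset_edgeUnion (left_mem_segment ℝ x w)

lemma fib_agr {l₁ l₂ : List V3} {a b : V3} {s : ℝ} (hp : (l₁ ++ a :: b :: l₂).Pairwise R)
    (hs1 : f a < s) (hs2 : s ≤ f b) :
    ⇑f ⁻¹' {s} ∩ edgeUnion (l₁ ++ a :: b :: l₂) = ⇑f ⁻¹' {s} ∩ segment ℝ a b := by
  have hab : f a < f b := pairwise_adj hp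
  apply Set.Subset.antisymm
  · intro x hx
    rw [edgeUnion_append] at hx
    obtain ⟨hfx, hx | hx⟩ := hx
    · exfalso
      have := (ub_edgeUnion (pairwise_prefix hp) hx).1
      rw [hfx] at this; linarith
    · rw [edgeUnion_cons_cons] at hx
      rcases hx with hx | hx
      · exact ⟨hfx, hx⟩
      · have hps : (b :: l₂).Pairwise R := by
          have : (a :: b :: l₂).Pairwise R := pairwise_suffix hp
          exact (List.pairwise_cons.1 this).2
        have h1 := (lb_edgeUnion hps hx).1
        rw [hfx] at h1
        have hsb : s = f b := le_antisymm hs2 h1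
        have : x = b := (lb_edgeUnion hps hx).2 (hfx.trans hsb)
        exact ⟨hfx, this ▸ right_mem_segment ℝ a b⟩
  · intro x hx
    exact ⟨hx.1, segment_subset_edgeUnion hx.2⟩

lemma exists_fib {t : ℝ} : ∀ (l : List V3) (a : V3), (a :: l).Chain' R → l ≠ [] →
    f a ≤ t → t ≤ f ((a :: l).getLast (by simp)) → ∃ x ∈ edgeUnion (a :: l), f x = t := by
  intro l
  induction l with
  | nil => intro a _ h; exact absurd rfl h
  | cons b l ih =>
    intro a hc _ h1 h2
    have hab : f a < f b := (List.isChain_cons_cons.1 hc).1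
    by_cases hb : t ≤ f b
    · obtain ⟨x, hx, hfx⟩ := exists_mem_segment_f_eq hab h1 hb
      exact ⟨x, by rw [edgeUnion_cons_cons]; exact Or.inl hx, hfx⟩
    · cases l with
      | nil =>
        exfalso; apply hb
        simpa using h2
      | cons c l =>
        obtain ⟨x, hx, hfx⟩ := ih b (List.isChain_cons_cons.1 hc).2 (by simp)
          (le_of_not_ge hb) (by rw [List.getLast_cons (by simp)] at h2; exact h2)
        exact ⟨x, by rw [edgeUnion_cons_cons]; exact Or.inr hx, hfx⟩

end NuAux

namespace NuAux

variable {f : V3 →ₗ[ℝ] ℝ} {P : Set V3}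

local notation "R" => (fun a b : V3 => f a < f b)

lemma getLast!_eq {l : List V3} (h : l ≠ []) : l.getLast! = l.getLast h :=
  List.getLast!_of_getLast? (List.getLast?_eq_getLast h ▸ rfl)

lemma head!_eq {l : List V3} (h : l ≠ []) : l.head! = l.head h :=
  List.head!_of_head? (List.head?_eq_head h ▸ rfl)

lemma getLast!_mem {l : List V3} (h : l ≠ []) : l.getLast! ∈ l := by
  rw [getLast!_eq h]; exact List.getLast_mem h

lemma extreme_not_interior {x c d : V3} (hx : x ∈ Set.extremePoints ℝ P)
    (hc : c ∈ P) (hd : d ∈ P) (hcd : x ∈ segment ℝ c d)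
    (h1 : f c < f x) (h2 : f x < f d) : False := by
  have hxc : c ≠ x := fun h => by rw [h] at h1; exact lt_irrefl _ h1
  have hxd : d ≠ x := fun h => by rw [h] at h2; exact lt_irrefl _ h2
  have hopen : x ∈ openSegment ℝ c d := mem_openSegment_of_ne_left_right hxc hxd hcd
  exact hxc (hx.2 hc hd hopen)

lemma shared_edge {a b c d x : V3} (he1 : IsEdgePair P a b) (he2 : IsEdgePair P c d)
    (hab : f a < f b) (hcd : f c < f d) (hx1 : x ∈ segment ℝ a b) (hx2 : x ∈ segment ℝ c d)
    (h1 : f a < f x) (h2 : f x < f b) (h3 : f c < f x) (h4 : f x < f d) :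
    a = c ∧ b = d := by
  have haP : a ∈ P := he1.2.1.1
  have hbP : b ∈ P := he1.2.2.1.1
  have hcP : c ∈ P := he2.2.1.1
  have hdP : d ∈ P := he2.2.2.1.1
  have hEx : IsExtreme ℝ P (segment ℝ a b ∩ segment ℝ c d) :=
    (he1.2.2.2.inter he2.2.2.2).isExtreme
  have hxa : a ≠ x := fun h => by rw [h] at h1; exact lt_irrefl _ h1
  have hxb : b ≠ x := fun h => by rw [h] at h2; exact lt_irrefl _ h2
  have hxc : c ≠ x := fun h => by rw [h] at h3; exact lt_irrefl _ h3
  have hxd : d ≠ x := fun h => by rw [h] at h4; exact lt_irrefl _ h4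
  have hopen1 : x ∈ openSegment ℝ a b := mem_openSegment_of_ne_left_right hxa hxb hx1
  have hopen2 : x ∈ openSegment ℝ c d := mem_openSegment_of_ne_left_right hxc hxd hx2
  have habE := hEx.2 haP hbP ⟨hx1, hx2⟩ hopen1
  have hcdE := hEx.2 hcP hdP ⟨hx1, hx2⟩ hopen2
  have habE' := hEx.2 hbP haP ⟨hx1, hx2⟩ (by rw [openSegment_symm]; exact hopen1)
  have hcdE' := hEx.2 hdP hcP ⟨hx1, hx2⟩ (by rw [openSegment_symm]; exact hopen2)
  have hac : f a = f c := by
    have h5 := (f_mem_segment habE.2 hcd.le).1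
    have h6 := (f_mem_segment hcdE.1 hab.le).1
    linarith
  have hbd : f b = f d := by
    have h5 := (f_mem_segment habE'.2 hcd.le).2
    have h6 := (f_mem_segment hcdE'.1 hab.le).2
    linarith
  constructor
  · exact (segment_injOn_f hab.ne (left_mem_segment ℝ a b) hcdE.1 hac).symm ▸ rfl
  · exact (segment_injOn_f hab.ne (right_mem_segment ℝ a b) hcdE'.1 hbd).symm ▸ rfl

lemma path_pairwise {l : List V3} (h : IsMonotonePath P f l) : l.Pairwise R := by
  have hc : l.Chain' R := List.IsChain.imp (fun a b h => h.2) h.2.2.1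
  haveI : IsTrans V3 R := ⟨fun _ _ _ h1 h2 => lt_trans h1 h2⟩
  exact List.isChain_iff_pairwise.1 hc

lemma chain'_adj {Q : V3 → V3 → Prop} {l₁ l₂ : List V3} {a b : V3}
    (hc : List.Chain' Q (l₁ ++ a :: b :: l₂)) : Q a b := by
  have h1 := (List.isChain_append.1 hc).2.1
  exact (List.isChain_cons_cons.1 h1).1

lemma path_edge {γ l₁ l₂ : List V3} {a b : V3} (h : IsMonotonePath P f γ)
    (hs : γ = l₁ ++ a :: b :: l₂) : IsEdgePair P a b :=
  (chain'_adj (hs ▸ h.2.2.1)).1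

lemma path_convex_subset (hP : Convex ℝ P) {l : List V3}
    (hl : ∀ v ∈ l, v ∈ Set.extremePoints ℝ P) : edgeUnion l ⊆ P := by
  intro x hx
  obtain ⟨l₁, a, b, l₂, hsp, hxs⟩ := mem_edgeUnion_iff.1 hx
  have ha : a ∈ P := (hl a (by rw [hsp]; simp)).1
  have hb : b ∈ P := (hl b (by rw [hsp]; simp)).1
  exact hP.segment_subset ha hb hxs

lemma path_head_mem {l : List V3} (h : IsMonotonePath P f l) : l.head! ∈ l :=
  List.head!_mem_self h.1

lemma heads_eq (hf : Generic P f) {γ γ' : List V3} (hγ : IsMonotonePath P f γ)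
    (hγ' : IsMonotonePath P f γ') : γ.head! = γ'.head! := by
  have h1 : γ.head! ∈ Set.extremePoints ℝ P := hγ.2.1 _ (path_head_mem hγ)
  have h2 : γ'.head! ∈ Set.extremePoints ℝ P := hγ'.2.1 _ (path_head_mem hγ')
  exact hf h1 h2 (le_antisymm (hγ.2.2.2 _ h2).1 (hγ'.2.2.2 _ h1).1)

lemma lasts_eq (hf : Generic P f) {γ γ' : List V3} (hγ : IsMonotonePath P f γ)
    (hγ' : IsMonotonePath P f γ') : γ.getLast! = γ'.getLast! := by
  have h1 : γ.getLast! ∈ Set.extremePoints ℝ P := hγ.2.1 _ (getLast!_mem hγ.1)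
  have h2 : γ'.getLast! ∈ Set.extremePoints ℝ P := hγ'.2.1 _ (getLast!_mem hγ'.1)
  exact hf h1 h2 (le_antisymm (hγ'.2.2.2 _ h1).2 (hγ.2.2.2 _ h2).2)

lemma path_two {l : List V3} (h : IsMonotonePath P f l)
    (hHL : f l.head! < f l.getLast!) : ∃ a l', l = a :: l' ∧ l' ≠ [] := by
  cases l with
  | nil => exact absurd rfl h.1
  | cons a l' =>
    cases l' with
    | nil =>
      rw [getLast!_eq (by simp)] at hHL
      simp at hHL
    | cons b l'' => exact ⟨a, b :: l'', rfl, by simp⟩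

end NuAux

namespace NuAux

variable {f : V3 →ₗ[ℝ] ℝ} {P : Set V3}

local notation "R" => (fun a b : V3 => f a < f b)

lemma path_exists_fib {γ : List V3} (hγ : IsMonotonePath P f γ) {t : ℝ}
    (h1 : f γ.head! ≤ t) (h2 : t ≤ f γ.getLast!) (hHL : f γ.head! < f γ.getLast!) :
    ∃ x ∈ edgeUnion γ, f x = t := by
  obtain ⟨a, l', heq, hne⟩ := path_two hγ hHL
  subst heq
  refine exists_fib l' a (List.IsChain.imp (fun a b h => h.2) hγ.2.2.1) hne ?_ ?_
  · exact h1
  · rwa [getLast!_eq hγ.1] at h2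

lemma shared_at (hf : Generic P f) {γ γ' : List V3} (hγ : IsMonotonePath P f γ)
    (hγ' : IsMonotonePath P f γ') {t : ℝ}
    (ht1 : f γ.head! < t) (ht2 : t < f γ.getLast!)
    (hagree : ⇑f ⁻¹' {t} ∩ edgeUnion γ = ⇑f ⁻¹' {t} ∩ edgeUnion γ') :
    (∃ v, v ∈ γ ∧ v ∈ γ' ∧ f v = t) ∨
    (∃ a b l₁ l₂ m₁ m₂, γ = l₁ ++ a :: b :: l₂ ∧ γ' = m₁ ++ a :: b :: m₂ ∧
      f a < t ∧ t < f b) := by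
  obtain ⟨x, hxU, hfx⟩ := path_exists_fib hγ ht1.le ht2.le (ht1.trans ht2)
  have hxU' : x ∈ edgeUnion γ' := by
    have hx : x ∈ ⇑f ⁻¹' {t} ∩ edgeUnion γ := ⟨hfx, hxU⟩
    rw [hagree] at hx
    exact hx.2
  obtain ⟨l₁, a, b, l₂, hsγ, hxab⟩ := mem_edgeUnion_iff.1 hxU
  obtain ⟨m₁, c, d, m₂, hsγ', hxcd⟩ := mem_edgeUnion_iff.1 hxU'
  have hab : f a < f b := pairwise_adj (hsγ ▸ path_pairwise hγ)
  have hcd : f c < f d := pairwise_adj (hsγ' ▸ path_pairwise hγ')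
  have hfab := f_mem_segment hxab hab.le
  have hfcd := f_mem_segment hxcd hcd.le
  have hmema : a ∈ γ := by rw [hsγ]; simp
  have hmemb : b ∈ γ := by rw [hsγ]; simp
  have hmemc : c ∈ γ' := by rw [hsγ']; simp
  have hmemd : d ∈ γ' := by rw [hsγ']; simp
  -- classify x on γ
  have hγcase : (x ∈ γ ∧ f x = t) ∨ (f a < f x ∧ f x < f b) := by
    rcases eq_or_lt_of_le hfab.1 with h | h
    · exact Or.inl ⟨by
        have : x = a := segment_injOn_f hab.ne hxab (left_mem_segment ℝ a b) h.symm
        rw [this]; exact hmema, hfx⟩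
    · rcases eq_or_lt_of_le hfab.2 with h' | h'
      · exact Or.inl ⟨by
          have : x = b := segment_injOn_f hab.ne hxab (right_mem_segment ℝ a b) h'
          rw [this]; exact hmemb, hfx⟩
      · exact Or.inr ⟨h, h'⟩
  have hγ'case : (x ∈ γ' ∧ f x = t) ∨ (f c < f x ∧ f x < f d) := by
    rcases eq_or_lt_of_le hfcd.1 with h | h
    · exact Or.inl ⟨by
        have : x = c := segment_injOn_f hcd.ne hxcd (left_mem_segment ℝ c d) h.symm
        rw [this]; exact hmemc, hfx⟩
    · rcases eq_or_lt_of_le hfcd.2 with h' | h'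
      · exact Or.inl ⟨by
          have : x = d := segment_injOn_f hcd.ne hxcd (right_mem_segment ℝ c d) h'
          rw [this]; exact hmemd, hfx⟩
      · exact Or.inr ⟨h, h'⟩
  rcases hγcase with ⟨hmem, -⟩ | ⟨hi1, hi2⟩
  · rcases hγ'case with ⟨hmem', -⟩ | ⟨hj1, hj2⟩
    · exact Or.inl ⟨x, hmem, hmem', hfx⟩
    · exact absurd (extreme_not_interior (hγ.2.1 x hmem) (hγ'.2.1 c hmemc).1
        (hγ'.2.1 d hmemd).1 hxcd hj1 hj2) (fun h => h)
  · rcases hγ'case with ⟨hmem', -⟩ | ⟨hj1, hj2⟩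
    · exact absurd (extreme_not_interior (hγ'.2.1 x hmem') (hγ.2.1 a hmema).1
        (hγ.2.1 b hmemb).1 hxab hi1 hi2) (fun h => h)
    · obtain ⟨rfl, rfl⟩ := shared_edge (path_edge hγ hsγ) (path_edge hγ' hsγ')
        hab hcd hxab hxcd hi1 hi2 hj1 hj2
      exact Or.inr ⟨a, b, l₁, l₂, m₁, m₂, hsγ, hsγ', hfx ▸ hi1, hfx ▸ hi2⟩

end NuAux

namespace NuAux

variable {f : V3 →ₗ[ℝ] ℝ} {P : Set V3}

local notation "R" => (fun a b : V3 => f a < f b)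

lemma inter_absorb {A B : Set V3} (h : B ⊆ P) : A ∩ P ∩ B = A ∩ B := by
  ext x
  simp only [Set.mem_inter_iff, and_assoc]
  exact ⟨fun ⟨h1, _, h3⟩ => ⟨h1, h3⟩, fun ⟨h1, h3⟩ => ⟨h1, h h3, h3⟩⟩

lemma mem_disagree_iff {γ γ' : List V3} (hs : edgeUnion γ ⊆ P) (hs' : edgeUnion γ' ⊆ P)
    {t : ℝ} : t ∈ disagreeSet P f γ γ' ↔
      t ∈ ⇑f '' P ∧ ⇑f ⁻¹' {t} ∩ edgeUnion γ ≠ ⇑f ⁻¹' {t} ∩ edgeUnion γ' := by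
  rw [disagreeSet, Set.mem_setOf_eq, inter_absorb hs, inter_absorb hs']

lemma path_lb {γ : List V3} (hγ : IsMonotonePath P f γ) {x : V3} (hx : x ∈ edgeUnion γ) :
    f γ.head! ≤ f x ∧ (f x = f γ.head! → x = γ.head!) := by
  cases γ with
  | nil => rw [edgeUnion_nil] at hx; exact absurd hx (Set.notMem_empty x)
  | cons a l => exact lb_edgeUnion (path_pairwise hγ) hx

lemma path_ub {γ : List V3} (hγ : IsMonotonePath P f γ) {x : V3} (hx : x ∈ edgeUnion γ) :
    f x ≤ f γ.getLast! ∧ (f x = f γ.getLast! → x = γ.getLast!) := by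
  rcases List.eq_nil_or_concat γ with rfl | ⟨m, v, rfl⟩
  · rw [edgeUnion_nil] at hx; exact absurd hx (Set.notMem_empty x)
  · rw [List.concat_eq_append] at hγ hx ⊢
    have h1 : (m ++ [v]).getLast! = v := by
      rw [getLast!_eq (by simp)]; exact List.getLast_concat
    rw [h1]
    exact ub_edgeUnion (path_pairwise hγ) hx

lemma fib_empty_lt {γ : List V3} (hγ : IsMonotonePath P f γ) {t : ℝ} (h : t < f γ.head!) :
    ⇑f ⁻¹' {t} ∩ edgeUnion γ = ∅ := by
  ext x
  simp only [Set.mem_inter_iff, Set.mem_preimage, Set.mem_singleton_iff,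
    Set.mem_empty_iff_false, iff_false, not_and]
  intro hfx hx
  have := (path_lb hγ hx).1
  rw [hfx] at this; linarith

lemma fib_empty_gt {γ : List V3} (hγ : IsMonotonePath P f γ) {t : ℝ} (h : f γ.getLast! < t) :
    ⇑f ⁻¹' {t} ∩ edgeUnion γ = ∅ := by
  ext x
  simp only [Set.mem_inter_iff, Set.mem_preimage, Set.mem_singleton_iff,
    Set.mem_empty_iff_false, iff_false, not_and]
  intro hfx hx
  have := (path_ub hγ hx).1
  rw [hfx] at this; linarith

lemma fib_head {γ : List V3} (hγ : IsMonotonePath P f γ)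
    (hHL : f γ.head! < f γ.getLast!) :
    ⇑f ⁻¹' {f γ.head!} ∩ edgeUnion γ = {γ.head!} := by
  obtain ⟨a, l', heq, hne⟩ := path_two hγ hHL
  subst heq
  have : (a :: l') = [] ++ a :: l' := rfl
  rw [this]
  exact fib_vertex (path_pairwise hγ) (Or.inr hne)

lemma fib_last {γ : List V3} (hγ : IsMonotonePath P f γ)
    (hHL : f γ.head! < f γ.getLast!) :
    ⇑f ⁻¹' {f γ.getLast!} ∩ edgeUnion γ = {γ.getLast!} := by
  rcases List.eq_nil_or_concat γ with rfl | ⟨m, v, rfl⟩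
  · exact absurd rfl hγ.1
  · rw [List.concat_eq_append] at hγ hHL ⊢
    have h1 : (m ++ [v]).getLast! = v := by
      rw [getLast!_eq (by simp)]; exact List.getLast_concat
    rw [h1] at hHL ⊢
    have hm : m ≠ [] := by
      rintro rfl
      simp only [List.nil_append] at hHL
      have h2 : ([v] : List V3).head! = v := rfl
      rw [h2] at hHL
      exact lt_irrefl _ hHL
    exact fib_vertex (path_pairwise hγ) (Or.inl hm)

lemma disagree_subset_Ioo (hf : Generic P f) {γ γ' : List V3}
    (hγ : IsMonotonePath P f γ) (hγ' : IsMonotonePath P f γ')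
    (hs : edgeUnion γ ⊆ P) (hs' : edgeUnion γ' ⊆ P)
    (hHL : f γ.head! < f γ.getLast!) :
    disagreeSet P f γ γ' ⊆ Set.Ioo (f γ.head!) (f γ.getLast!) := by
  intro t ht
  have hheads := heads_eq hf hγ hγ'
  have hlasts := lasts_eq hf hγ hγ'
  have hHL' : f γ'.head! < f γ'.getLast! := by rw [← hheads, ← hlasts]; exact hHL
  by_contra hcon
  rw [Set.mem_Ioo, not_and_or] at hcon
  have hne := ((mem_disagree_iff hs hs').1 ht).2
  apply hne
  rcases hcon with h | h
  · rcases lt_or_eq_of_le (not_lt.1 h) with h1 | h1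
    · rw [fib_empty_lt hγ h1, fib_empty_lt hγ' (by rwa [← hheads])]
    · rw [h1, fib_head hγ hHL]
      have h2 : f γ.head! = f γ'.head! := by rw [hheads]
      rw [h2, fib_head hγ' hHL', ← hheads]
  · rcases lt_or_eq_of_le (not_lt.1 h) with h1 | h1
    · rw [fib_empty_gt hγ h1, fib_empty_gt hγ' (by rwa [← hlasts])]
    · rw [← h1, fib_last hγ hHL]
      have h2 : f γ.getLast! = f γ'.getLast! := by rw [hlasts]
      rw [h2, fib_last hγ' hHL', ← hlasts]

end NuAux

namespace NuAux

variable {f : V3 →ₗ[ℝ] ℝ} {P : Set V3}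

local notation "R" => (fun a b : V3 => f a < f b)

lemma head!_append_cons (m : List V3) (v : V3) (l l' : List V3) :
    (m ++ v :: l).head! = (m ++ v :: l').head! := by cases m <;> rfl

lemma getLast!_append_cons (m l : List V3) (v : V3) :
    (m ++ v :: l).getLast! = (v :: l).getLast! := by
  rw [getLast!_eq (by simp), getLast!_eq (by simp : (v :: l : List V3) ≠ [])]
  exact List.getLast_append_of_ne_nil _ (by simp)

lemma splice_path {γ γ' l₁ l₂ m₁ m₂ : List V3} {v : V3} (hγ : IsMonotonePath P f γ)
    (hγ' : IsMonotonePath P f γ') (hsγ : γ = l₁ ++ v :: l₂) (hsγ' : γ' = m₁ ++ v :: m₂) :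
    IsMonotonePath P f (m₁ ++ v :: l₂) ∧ (m₁ ++ v :: l₂).head! = γ'.head! ∧
      (m₁ ++ v :: l₂).getLast! = γ.getLast! := by
  have hhead : (m₁ ++ v :: l₂).head! = γ'.head! := by
    rw [hsγ']; exact head!_append_cons m₁ v l₂ m₂
  have hlast : (m₁ ++ v :: l₂).getLast! = γ.getLast! := by
    rw [hsγ, getLast!_append_cons, getLast!_append_cons]
  refine ⟨⟨by simp, ?_, ?_, ?_⟩, hhead, hlast⟩
  · intro w hw
    rw [List.mem_append] at hw
    rcases hw with hw | hw
    · exact hγ'.2.1 w (by rw [hsγ']; exact List.mem_append_left _ hw)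
    · exact hγ.2.1 w (by rw [hsγ]; exact List.mem_append_right _ hw)
  · have hcγ := hsγ ▸ hγ.2.2.1
    have hcγ' := hsγ' ▸ hγ'.2.2.1
    obtain ⟨-, hc2, -⟩ := List.isChain_append.1 hcγ
    obtain ⟨hc1', -, hrel'⟩ := List.isChain_append.1 hcγ'
    refine List.isChain_append.2 ⟨hc1', hc2, ?_⟩
    intro x hx y hy
    simp only [List.head?_cons, Option.mem_def, Option.some.injEq] at hy
    subst hy
    exact hrel' x hx v (by simp)
  · intro w hw
    rw [hhead, hlast]
    exact ⟨(hγ'.2.2.2 w hw).1, (hγ.2.2.2 w hw).2⟩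

lemma splice_disagree_lower {γ γ' l₁ l₂ m₁ m₂ : List V3} {v : V3}
    (hγ : IsMonotonePath P f γ) (hγ' : IsMonotonePath P f γ')
    (hσ : IsMonotonePath P f (m₁ ++ v :: l₂))
    (hsγ : γ = l₁ ++ v :: l₂) (hsγ' : γ' = m₁ ++ v :: m₂)
    (hl₂ : l₂ ≠ [])
    (hsub : edgeUnion γ ⊆ P) (hsub' : edgeUnion γ' ⊆ P)
    (hsubσ : edgeUnion (m₁ ++ v :: l₂) ⊆ P) :
    disagreeSet P f γ (m₁ ++ v :: l₂) = disagreeSet P f γ γ' ∩ Set.Iio (f v) := by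
  have hpγ := path_pairwise hγ
  have hpγ' := path_pairwise hγ'
  have hpσ := path_pairwise hσ
  ext t
  rw [mem_disagree_iff hsub hsubσ, Set.mem_inter_iff, mem_disagree_iff hsub hsub',
    Set.mem_Iio]
  constructor
  · rintro ⟨h1, hne⟩
    have hlt : t < f v := by
      by_contra hge
      apply hne
      rcases lt_or_eq_of_le (not_lt.1 hge) with h | h
      · have e1 : ⇑f ⁻¹' {t} ∩ edgeUnion γ = ⇑f ⁻¹' {t} ∩ edgeUnion (v :: l₂) := by
          rw [hsγ]; exact fib_gt (hsγ ▸ hpγ) h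
        have e2 : ⇑f ⁻¹' {t} ∩ edgeUnion (m₁ ++ v :: l₂) =
            ⇑f ⁻¹' {t} ∩ edgeUnion (v :: l₂) := fib_gt hpσ h
        rw [e1, e2]
      · subst h
        have e1 : ⇑f ⁻¹' {f v} ∩ edgeUnion γ = {v} := by
          rw [hsγ]; exact fib_vertex (hsγ ▸ hpγ) (Or.inr hl₂)
        have e2 : ⇑f ⁻¹' {f v} ∩ edgeUnion (m₁ ++ v :: l₂) = {v} :=
          fib_vertex hpσ (Or.inr hl₂)
        rw [e1, e2]
    have hfib : ⇑f ⁻¹' {t} ∩ edgeUnion (m₁ ++ v :: l₂) = ⇑f ⁻¹' {t} ∩ edgeUnion γ' := by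
      have e1 : ⇑f ⁻¹' {t} ∩ edgeUnion (m₁ ++ v :: l₂) =
          ⇑f ⁻¹' {t} ∩ edgeUnion (m₁ ++ [v]) := fib_lt hpσ hlt
      have e2 : ⇑f ⁻¹' {t} ∩ edgeUnion γ' = ⇑f ⁻¹' {t} ∩ edgeUnion (m₁ ++ [v]) := by
        rw [hsγ']; exact fib_lt (hsγ' ▸ hpγ') hlt
      rw [e1, e2]
    exact ⟨⟨h1, fun heq => hne (heq.trans hfib.symm)⟩, hlt⟩
  · rintro ⟨⟨h1, hne⟩, hlt⟩
    have hfib : ⇑f ⁻¹' {t} ∩ edgeUnion (m₁ ++ v :: l₂) = ⇑f ⁻¹' {t} ∩ edgeUnion γ' := by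
      have e1 : ⇑f ⁻¹' {t} ∩ edgeUnion (m₁ ++ v :: l₂) =
          ⇑f ⁻¹' {t} ∩ edgeUnion (m₁ ++ [v]) := fib_lt hpσ hlt
      have e2 : ⇑f ⁻¹' {t} ∩ edgeUnion γ' = ⇑f ⁻¹' {t} ∩ edgeUnion (m₁ ++ [v]) := by
        rw [hsγ']; exact fib_lt (hsγ' ▸ hpγ') hlt
      rw [e1, e2]
    exact ⟨h1, fun heq => hne (heq.trans hfib)⟩

lemma splice_disagree_upper {γ γ' l₁ l₂ m₁ m₂ : List V3} {v : V3}
    (hγ : IsMonotonePath P f γ) (hγ' : IsMonotonePath P f γ')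
    (hσ : IsMonotonePath P f (m₁ ++ v :: l₂))
    (hsγ : γ = l₁ ++ v :: l₂) (hsγ' : γ' = m₁ ++ v :: m₂)
    (hl₂ : l₂ ≠ []) (hm₂ : m₂ ≠ [])
    (hsub : edgeUnion γ ⊆ P) (hsub' : edgeUnion γ' ⊆ P)
    (hsubσ : edgeUnion (m₁ ++ v :: l₂) ⊆ P) :
    disagreeSet P f (m₁ ++ v :: l₂) γ' = disagreeSet P f γ γ' ∩ Set.Ioi (f v) := by
  have hpγ := path_pairwise hγ
  have hpγ' := path_pairwise hγ'
  have hpσ := path_pairwise hσ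
  ext t
  rw [mem_disagree_iff hsubσ hsub', Set.mem_inter_iff, mem_disagree_iff hsub hsub',
    Set.mem_Ioi]
  constructor
  · rintro ⟨h1, hne⟩
    have hgt : f v < t := by
      by_contra hge
      apply hne
      rcases lt_or_eq_of_le (not_lt.1 hge) with h | h
      · have e1 : ⇑f ⁻¹' {t} ∩ edgeUnion (m₁ ++ v :: l₂) =
            ⇑f ⁻¹' {t} ∩ edgeUnion (m₁ ++ [v]) := fib_lt hpσ h
        have e2 : ⇑f ⁻¹' {t} ∩ edgeUnion γ' = ⇑f ⁻¹' {t} ∩ edgeUnion (m₁ ++ [v]) := by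
          rw [hsγ']; exact fib_lt (hsγ' ▸ hpγ') h
        rw [e1, e2]
      · have e1 : ⇑f ⁻¹' {t} ∩ edgeUnion (m₁ ++ v :: l₂) = {v} := by
          rw [h]; exact fib_vertex hpσ (Or.inr hl₂)
        have e2 : ⇑f ⁻¹' {t} ∩ edgeUnion γ' = {v} := by
          rw [h, hsγ']; exact fib_vertex (hsγ' ▸ hpγ') (Or.inr hm₂)
        rw [e1, e2]
    have hfib : ⇑f ⁻¹' {t} ∩ edgeUnion (m₁ ++ v :: l₂) = ⇑f ⁻¹' {t} ∩ edgeUnion γ := by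
      have e1 : ⇑f ⁻¹' {t} ∩ edgeUnion (m₁ ++ v :: l₂) =
          ⇑f ⁻¹' {t} ∩ edgeUnion (v :: l₂) := fib_gt hpσ hgt
      have e2 : ⇑f ⁻¹' {t} ∩ edgeUnion γ = ⇑f ⁻¹' {t} ∩ edgeUnion (v :: l₂) := by
        rw [hsγ]; exact fib_gt (hsγ ▸ hpγ) hgt
      rw [e1, e2]
    exact ⟨⟨h1, fun heq => hne (hfib.trans heq)⟩, hgt⟩
  · rintro ⟨⟨h1, hne⟩, hgt⟩
    have hfib : ⇑f ⁻¹' {t} ∩ edgeUnion (m₁ ++ v :: l₂) = ⇑f ⁻¹' {t} ∩ edgeUnion γ := by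
      have e1 : ⇑f ⁻¹' {t} ∩ edgeUnion (m₁ ++ v :: l₂) =
          ⇑f ⁻¹' {t} ∩ edgeUnion (v :: l₂) := fib_gt hpσ hgt
      have e2 : ⇑f ⁻¹' {t} ∩ edgeUnion γ = ⇑f ⁻¹' {t} ∩ edgeUnion (v :: l₂) := by
        rw [hsγ]; exact fib_gt (hsγ ▸ hpγ) hgt
      rw [e1, e2]
    exact ⟨h1, fun heq => hne (hfib.symm.trans heq)⟩

end NuAux

namespace NuAux

section CC

variable {X : Type*} [TopologicalSpace X]

lemma mk_eq_mk_iff_compIn {E : Set X} {x y : X} (hx : x ∈ E) (hy : y ∈ E) :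
    (ConnectedComponents.mk ⟨x, hx⟩ : ConnectedComponents E) = ConnectedComponents.mk ⟨y, hy⟩
      ↔ connectedComponentIn E x = connectedComponentIn E y := by
  rw [ConnectedComponents.coe_eq_coe, connectedComponentIn_eq_image hx,
    connectedComponentIn_eq_image hy]
  constructor
  · intro h; rw [h]
  · exact fun h => Set.image_injective.2 Subtype.val_injective h

lemma card_cc (E : Set X) :
    Nat.card (ConnectedComponents E) = Nat.card ↥(connectedComponentIn E '' E) := by
  refine (Nat.card_eq_of_bijective (fun S : ↥(connectedComponentIn E '' E) =>
    (ConnectedComponents.mk ⟨S.2.choose, S.2.choose_spec.1⟩ : ConnectedComponents E))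
    ⟨?_, ?_⟩).symm
  · intro S S' h
    rw [mk_eq_mk_iff_compIn] at h
    apply Subtype.ext
    rw [← S.2.choose_spec.2, ← S'.2.choose_spec.2, h]
  · intro c
    obtain ⟨p, rfl⟩ := ConnectedComponents.surjective_coe c
    refine ⟨⟨connectedComponentIn E p.1, Set.mem_image_of_mem _ p.2⟩, ?_⟩
    have h := (Set.mem_image_of_mem (connectedComponentIn E) p.2 :
      connectedComponentIn E p.1 ∈ _)
    exact (mk_eq_mk_iff_compIn h.choose_spec.1 p.2).2 h.choose_spec.2

lemma cc_card_one {E : Set X} (hE : IsConnected E) :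
    Nat.card (ConnectedComponents E) = 1 := by
  rw [card_cc]
  have himg : connectedComponentIn E '' E = {E} := by
    apply Set.Subset.antisymm
    · rintro S ⟨x, hx, rfl⟩
      exact (connectedComponentIn_subset E x).antisymm
        (hE.isPreconnected.subset_connectedComponentIn hx Set.Subset.rfl)
    · rintro S hS
      rw [Set.mem_singleton_iff] at hS
      obtain ⟨x, hx⟩ := hE.nonempty
      refine ⟨x, hx, ?_⟩
      rw [hS]
      exact ((connectedComponentIn_subset E x).antisymm
        (hE.isPreconnected.subset_connectedComponentIn hx Set.Subset.rfl))
  rw [himg]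
  exact Nat.card_unique

lemma compIn_remove {E : Set X} {x₀ : X} (hx₀ : x₀ ∈ E) {y : X}
    (hy : y ∈ E \ connectedComponentIn E x₀) :
    connectedComponentIn (E \ connectedComponentIn E x₀) y = connectedComponentIn E y := by
  apply Set.Subset.antisymm
  · exact isPreconnected_connectedComponentIn.subset_connectedComponentIn
      (mem_connectedComponentIn hy)
      ((connectedComponentIn_subset _ y).trans Set.diff_subset)
  · apply isPreconnected_connectedComponentIn.subset_connectedComponentIn
      (mem_connectedComponentIn hy.1)
    intro z hz
    refine ⟨connectedComponentIn_subset _ _ hz, fun hzC => ?_⟩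
    have h1 : connectedComponentIn E y = connectedComponentIn E z :=
      connectedComponentIn_eq hz
    have h2 : connectedComponentIn E x₀ = connectedComponentIn E z :=
      connectedComponentIn_eq hzC
    exact hy.2 (by rw [h2, ← h1]; exact mem_connectedComponentIn hy.1)

lemma image_compIn_remove {E : Set X} {x₀ : X} (hx₀ : x₀ ∈ E) :
    connectedComponentIn (E \ connectedComponentIn E x₀) ''
        (E \ connectedComponentIn E x₀)
      = (connectedComponentIn E '' E) \ {connectedComponentIn E x₀} := by
  apply Set.Subset.antisymm
  · rintro S ⟨y, hy, rfl⟩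
    rw [compIn_remove hx₀ hy]
    refine ⟨⟨y, hy.1, rfl⟩, ?_⟩
    rw [Set.mem_singleton_iff]
    intro h
    exact hy.2 (by rw [← h]; exact mem_connectedComponentIn hy.1)
  · rintro S ⟨⟨y, hy, rfl⟩, hS⟩
    rw [Set.mem_singleton_iff] at hS
    have hyC : y ∉ connectedComponentIn E x₀ := by
      intro h
      exact hS (connectedComponentIn_eq h).symm
    exact ⟨y, ⟨hy, hyC⟩, compIn_remove hx₀ ⟨hy, hyC⟩⟩

lemma closure_compIn {E : Set X} [Finite (ConnectedComponents E)] {x₀ : X} (hx₀ : x₀ ∈ E)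
    {t : X} (ht : t ∈ E) (hcl : t ∈ closure (connectedComponentIn E x₀)) :
    t ∈ connectedComponentIn E x₀ := by
  have hA : IsClosed (connectedComponent (⟨x₀, hx₀⟩ : E)) := isClosed_connectedComponent
  have h1 : (⟨t, ht⟩ : E) ∈ closure (connectedComponent (⟨x₀, hx₀⟩ : E)) := by
    rw [closure_subtype, ← connectedComponentIn_eq_image hx₀]
    exact hcl
  rw [hA.closure_eq] at h1
  rw [connectedComponentIn_eq_image hx₀]
  exact ⟨⟨t, ht⟩, h1, rfl⟩

lemma closure_compIn_compl {E : Set X} [Finite (ConnectedComponents E)] {x₀ : X}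
    (hx₀ : x₀ ∈ E) {t : X} (ht : t ∈ E)
    (hcl : t ∈ closure (E \ connectedComponentIn E x₀)) :
    t ∈ E \ connectedComponentIn E x₀ := by
  set B : Set E := (↑) ⁻¹' (E \ connectedComponentIn E x₀) with hB
  have hBeq : B = ConnectedComponents.mk ⁻¹'
      ({(ConnectedComponents.mk ⟨x₀, hx₀⟩ : ConnectedComponents E)}ᶜ) := by
    ext z
    simp only [hB, Set.mem_preimage, Set.mem_diff, Set.mem_compl_iff,
      Set.mem_singleton_iff]
    rw [ConnectedComponents.coe_eq_coe']
    have hmem : z.1 ∈ connectedComponentIn E x₀ ↔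
        z ∈ connectedComponent (⟨x₀, hx₀⟩ : E) := by
      rw [connectedComponentIn_eq_image hx₀]
      exact Subtype.val_injective.mem_set_image
    constructor
    · rintro ⟨-, hz⟩ h
      exact hz (hmem.2 h)
    · intro h
      exact ⟨z.2, fun hz => h (hmem.1 hz)⟩
  have hBclosed : IsClosed B := by
    rw [hBeq, ← Set.biUnion_preimage_singleton]
    apply Set.Finite.isClosed_biUnion (Set.toFinite _)
    intro c _
    obtain ⟨z, rfl⟩ := ConnectedComponents.surjective_coe c
    rw [connectedComponents_preimage_singleton]
    exact isClosed_connectedComponent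
  have h1 : (⟨t, ht⟩ : E) ∈ closure B := by
    rw [closure_subtype]
    have himg : (↑) '' B = E \ connectedComponentIn E x₀ := by
      rw [hB, Subtype.image_preimage_coe]
      exact Set.inter_eq_right.2 Set.diff_subset
    rw [himg]
    exact hcl
  rw [hBclosed.closure_eq] at h1
  exact h1

end CC

end NuAux

namespace NuAux

lemma comps_eq_of_sSup_eq {D : Set ℝ} [Finite (ConnectedComponents D)] {x y : ℝ}
    (hx : x ∈ D) (hy : y ∈ D) (hbdd : BddAbove D)
    (h : sSup (connectedComponentIn D x) = sSup (connectedComponentIn D y)) :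
    connectedComponentIn D x = connectedComponentIn D y := by
  set S := connectedComponentIn D x with hS
  set T := connectedComponentIn D y with hT
  have hSne : S.Nonempty := ⟨x, mem_connectedComponentIn hx⟩
  have hTne : T.Nonempty := ⟨y, mem_connectedComponentIn hy⟩
  have hSsub : S ⊆ D := connectedComponentIn_subset D x
  have hTsub : T ⊆ D := connectedComponentIn_subset D y
  have hSbdd : BddAbove S := hbdd.mono hSsub
  have hTbdd : BddAbove T := hbdd.mono hTsub
  have hSord : S.OrdConnected :=
    (isConnected_connectedComponentIn_iff.2 hx).isPreconnected.ordConnected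
  by_cases hs : sSup S ∈ D
  · have h1 : sSup S ∈ S := closure_compIn hx hs (csSup_mem_closure hSne hSbdd)
    have h2 : sSup S ∈ T := by
      rw [h] at hs ⊢
      exact closure_compIn hy hs (csSup_mem_closure hTne hTbdd)
    rw [hS, hT, connectedComponentIn_eq (hS ▸ h1 : sSup S ∈ connectedComponentIn D x)]
    exact (connectedComponentIn_eq (hT ▸ h2 : sSup S ∈ connectedComponentIn D y)).symm
  · -- sup not attained in either component; interleave
    obtain ⟨a, haS⟩ := hSne
    have haD : a ∈ D := hSsub haS
    have halt : a < sSup S := lt_of_le_of_ne (le_csSup hSbdd haS) (fun he => hs (he ▸ haD))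
    obtain ⟨b, hbT, hab⟩ := exists_lt_of_lt_csSup hTne (h ▸ halt)
    have hblt : b < sSup S := lt_of_le_of_ne (h ▸ le_csSup hTbdd hbT)
      (fun he => hs (he ▸ hTsub hbT))
    obtain ⟨a', ha'S, hba'⟩ := exists_lt_of_lt_csSup ⟨x, mem_connectedComponentIn hx⟩ hblt
    have hbS : b ∈ S := hSord.out haS ha'S ⟨hab.le, hba'.le⟩
    rw [hS, hT, connectedComponentIn_eq (hS ▸ hbS : b ∈ connectedComponentIn D x)]
    exact (connectedComponentIn_eq (hT ▸ hbT : b ∈ connectedComponentIn D y)).symm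

lemma comp_pointwise_lt {D : Set ℝ} [Finite (ConnectedComponents D)] {x y : ℝ}
    (hx : x ∈ D) (hy : y ∈ D) (hbdd : BddAbove D)
    (hne : connectedComponentIn D x ≠ connectedComponentIn D y)
    (hsup : sSup (connectedComponentIn D x) ≤ sSup (connectedComponentIn D y)) :
    ∀ z ∈ connectedComponentIn D x, ∀ w ∈ connectedComponentIn D y, z < w := by
  intro z hz w hw
  have hsup' : sSup (connectedComponentIn D x) < sSup (connectedComponentIn D y) :=
    lt_of_le_of_ne hsup (fun h => hne (comps_eq_of_sSup_eq hx hy hbdd h))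
  by_contra hzw
  push_neg at hzw
  -- w ≤ z ; find w' ∈ comp y with z < w', then z ∈ comp y, contradiction
  have hzsup : z ≤ sSup (connectedComponentIn D x) :=
    le_csSup (hbdd.mono (connectedComponentIn_subset D x)) hz
  obtain ⟨w', hw', hzw'⟩ := exists_lt_of_lt_csSup
    ⟨y, mem_connectedComponentIn hy⟩ (lt_of_le_of_lt hzsup hsup')
  have hyord : (connectedComponentIn D y).OrdConnected :=
    (isConnected_connectedComponentIn_iff.2 hy).isPreconnected.ordConnected
  have hzy : z ∈ connectedComponentIn D y := hyord.out hw hw' ⟨hzw, hzw'.le⟩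
  exact hne ((connectedComponentIn_eq hz).trans (connectedComponentIn_eq hzy).symm)

end NuAux

namespace NuAux

variable {f : V3 →ₗ[ℝ] ℝ} {P : Set V3}

lemma head_lt_last (hP : IsPolytope3 P) (hf : Generic P f) {γ : List V3}
    (hγ : IsMonotonePath P f γ) : f γ.head! < f γ.getLast! := by
  by_contra hcon
  have hhead : γ.head! ∈ Set.extremePoints ℝ P := hγ.2.1 _ (path_head_mem hγ)
  have hext : Set.extremePoints ℝ P ⊆ {γ.head!} := by
    intro u hu
    have h1 := hγ.2.2.2 u hu
    have h2 := hγ.2.2.2 γ.head! hhead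
    have : f u = f γ.head! := le_antisymm (by linarith [not_lt.1 hcon]) h1.1
    exact hf hu hhead this
  obtain ⟨⟨S, hPS⟩, hint⟩ := hP
  have hcomp : IsCompact P := hPS ▸ S.finite_toSet.isCompact_convexHull ℝ
  have hconv : Convex ℝ P := hPS ▸ convex_convexHull ℝ _
  have hKM : closure (convexHull ℝ (Set.extremePoints ℝ P)) = P :=
    closure_convexHull_extremePoints hcomp hconv
  have hPsub : P ⊆ {γ.head!} := by
    rw [← hKM]
    have h1 : convexHull ℝ (Set.extremePoints ℝ P) ⊆ {γ.head!} := by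
      have := convexHull_mono hext (𝕜 := ℝ)
      rwa [convexHull_singleton] at this
    calc closure (convexHull ℝ (Set.extremePoints ℝ P)) ⊆ closure {γ.head!} :=
          closure_mono h1
      _ = {γ.head!} := closure_singleton
  obtain ⟨x, hx⟩ := hint
  obtain ⟨ε, hε, hball⟩ := Metric.isOpen_iff.1 isOpen_interior x hx
  obtain ⟨w, hw⟩ := exists_ne (0 : V3)
  have hwn : (0 : ℝ) < ‖w‖ := norm_pos_iff.2 hw
  set c : ℝ := ε / (2 * ‖w‖) with hc
  have hcpos : 0 < c := by positivity
  have hyball : x + c • w ∈ Metric.ball x ε := by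
    rw [Metric.mem_ball, dist_eq_norm]
    have : x + c • w - x = c • w := by abel
    rw [this, norm_smul, Real.norm_eq_abs, abs_of_pos hcpos, hc]
    rw [div_mul_eq_mul_div, mul_comm (2 : ℝ) ‖w‖, ← div_div,
      mul_div_assoc, div_self (ne_of_gt hwn), mul_one]
    linarith
  have hx1 : x ∈ ({γ.head!} : Set V3) := hPsub (interior_subset (hball (Metric.mem_ball_self hε)))
  have hy1 : x + c • w ∈ ({γ.head!} : Set V3) := hPsub (interior_subset (hball hyball))
  rw [Set.mem_singleton_iff] at hx1 hy1
  have hzero : c • w = 0 := by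
    have h := hy1.trans hx1.symm
    have h2 := congrArg (fun z => z - x) h
    simpa using h2
  exact hw ((smul_eq_zero.1 hzero).resolve_left (ne_of_gt hcpos))

end NuAux

namespace NuAux

variable {f : V3 →ₗ[ℝ] ℝ} {P : Set V3}

lemma step (hP : IsPolytope3 P) (hf : Generic P f) {γ γ' : List V3}
    (hγ : IsMonotonePath P f γ) (hγ' : IsMonotonePath P f γ')
    (h2 : 2 ≤ Nat.card (ConnectedComponents (disagreeSet P f γ γ'))) :
    ∃ σ : List V3, IsMonotonePath P f σ ∧ nu P f γ σ = 1 ∧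
      nu P f σ γ' = nu P f γ γ' - 1 := by
  classical
  have hPC : Convex ℝ P := by
    obtain ⟨⟨S, hPS⟩, -⟩ := hP
    exact hPS ▸ convex_convexHull ℝ _
  have hsub : edgeUnion γ ⊆ P := path_convex_subset hPC hγ.2.1
  have hsub' : edgeUnion γ' ⊆ P := path_convex_subset hPC hγ'.2.1
  have hHL : f γ.head! < f γ.getLast! := head_lt_last hP hf hγ
  have hlasts := lasts_eq hf hγ hγ'
  set D := disagreeSet P f γ γ' with hD
  have hDIoo : D ⊆ Set.Ioo (f γ.head!) (f γ.getLast!) :=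
    disagree_subset_Ioo hf hγ hγ' hsub hsub' hHL
  have hbddA : BddAbove D := ⟨f γ.getLast!, fun y hy => (hDIoo hy).2.le⟩
  have hbddB : BddBelow D := ⟨f γ.head!, fun y hy => (hDIoo hy).1.le⟩
  haveI hfin : Finite (ConnectedComponents D) :=
    (Nat.card_pos_iff.1 (lt_of_lt_of_le two_pos h2)).2
  haveI hccne : Nonempty (ConnectedComponents D) :=
    (Nat.card_pos_iff.1 (lt_of_lt_of_le two_pos h2)).1
  have hcard : Nat.card ↥(connectedComponentIn D '' D) =
      Nat.card (ConnectedComponents D) := (card_cc D).symm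
  haveI hfin𝒞 : Finite ↥(connectedComponentIn D '' D) :=
    (Nat.card_pos_iff.1 (by rw [hcard]; exact lt_of_lt_of_le two_pos h2)).2
  have h𝒞fin : (connectedComponentIn D '' D).Finite := Set.toFinite _
  have h𝒞ne : (connectedComponentIn D '' D).Nonempty := by
    obtain ⟨c⟩ := hccne
    obtain ⟨p, -⟩ := ConnectedComponents.surjective_coe c
    exact ⟨_, Set.mem_image_of_mem _ p.2⟩
  obtain ⟨Sc, hScmem, hScmin⟩ := Set.exists_min_image _ sSup h𝒞fin h𝒞ne
  obtain ⟨x₀, hx₀D, rfl⟩ := hScmem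
  have hCsub : connectedComponentIn D x₀ ⊆ D := connectedComponentIn_subset D x₀
  have hCne : (connectedComponentIn D x₀).Nonempty := ⟨x₀, mem_connectedComponentIn hx₀D⟩
  have hCconn : IsConnected (connectedComponentIn D x₀) :=
    isConnected_connectedComponentIn_iff.2 hx₀D
  have hCbdd : BddAbove (connectedComponentIn D x₀) := hbddA.mono hCsub
  have hrest : (D \ connectedComponentIn D x₀).Nonempty := by
    by_contra h
    rw [Set.not_nonempty_iff_eq_empty, Set.diff_eq_empty] at h
    have himg : connectedComponentIn D '' D = {connectedComponentIn D x₀} := by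
      apply Set.Subset.antisymm
      · rintro S ⟨y, hy, rfl⟩
        rw [Set.mem_singleton_iff]
        exact (connectedComponentIn_eq (h hy)).symm
      · rintro S hS
        rw [Set.mem_singleton_iff] at hS
        rw [hS]
        exact Set.mem_image_of_mem _ hx₀D
    have hone : Nat.card ↥(connectedComponentIn D '' D) = 1 := by
      rw [himg]; exact Nat.card_unique
    rw [hcard] at hone
    omega
  have hbelow : ∀ y ∈ D \ connectedComponentIn D x₀,
      ∀ z ∈ connectedComponentIn D x₀, z < y := by
    intro y hy z hz
    have hne : connectedComponentIn D x₀ ≠ connectedComponentIn D y := by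
      intro h
      exact hy.2 (h ▸ mem_connectedComponentIn hy.1)
    exact comp_pointwise_lt hx₀D hy.1 hbddA hne
      (hScmin _ (Set.mem_image_of_mem _ hy.1)) z hz y (mem_connectedComponentIn hy.1)
  have hbddBrest : BddBelow (D \ connectedComponentIn D x₀) := hbddB.mono Set.diff_subset
  -- agreement dichotomy at a non-disagreement level
  have hagree_of : ∀ t : ℝ, t ∉ D → f γ.head! < t → t < f γ.getLast! →
      (∃ v, v ∈ γ ∧ v ∈ γ' ∧ f v = t) ∨
      (∃ a b la lb ma mb, γ = la ++ a :: b :: lb ∧ γ' = ma ++ a :: b :: mb ∧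
        f a < t ∧ t < f b) := by
    intro t htD ht1 ht2
    obtain ⟨x, hxU, hfx⟩ := path_exists_fib hγ ht1.le ht2.le hHL
    have htim : t ∈ ⇑f '' P := ⟨x, hsub hxU, hfx⟩
    have hagree : ⇑f ⁻¹' {t} ∩ edgeUnion γ = ⇑f ⁻¹' {t} ∩ edgeUnion γ' := by
      by_contra hne
      exact htD ((mem_disagree_iff hsub hsub').2 ⟨htim, hne⟩)
    exact shared_at hf hγ hγ' ht1 ht2 hagree
  -- no disagreement inside a shared edge
  have hIoc : ∀ (a b : V3) (la lb ma mb : List V3), γ = la ++ a :: b :: lb →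
      γ' = ma ++ a :: b :: mb → ∀ s, f a < s → s ≤ f b → s ∉ D := by
    intro a b la lb ma mb hsa hsb s hs1 hs2 hsD
    have h1 : ⇑f ⁻¹' {s} ∩ edgeUnion γ = ⇑f ⁻¹' {s} ∩ segment ℝ a b := by
      rw [hsa]; exact fib_agr (hsa ▸ path_pairwise hγ) hs1 hs2
    have h2 : ⇑f ⁻¹' {s} ∩ edgeUnion γ' = ⇑f ⁻¹' {s} ∩ segment ℝ a b := by
      rw [hsb]; exact fib_agr (hsb ▸ path_pairwise hγ') hs1 hs2
    exact ((mem_disagree_iff hsub hsub').1 hsD).2 (h1.trans h2.symm)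
  have ht0le : sSup (connectedComponentIn D x₀) ≤ sInf (D \ connectedComponentIn D x₀) :=
    csSup_le hCne (fun z hz => le_csInf hrest (fun y hy => (hbelow y hy z hz).le))
  have hkey : ∃ (v : V3) (l₁ l₂ m₁ m₂ : List V3), γ = l₁ ++ v :: l₂ ∧ γ' = m₁ ++ v :: m₂ ∧
      (∀ z ∈ connectedComponentIn D x₀, z < f v) ∧
      (∀ y ∈ D \ connectedComponentIn D x₀, f v < y) := by
    rcases lt_or_eq_of_le ht0le with hcase | hcase
    · -- there is an open gap; pick a non-vertex level inside it
      obtain ⟨t, ⟨⟨ht0t, htt1⟩, htV⟩⟩ :=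
        ((Set.Ioo_infinite hcase).diff (((γ ++ γ').map f).toFinset : Set ℝ).toFinite).nonempty
      have htD : t ∉ D := by
        intro h
        rcases em (t ∈ connectedComponentIn D x₀) with hc | hc
        · exact absurd ht0t (not_lt.2 (le_csSup hCbdd hc))
        · exact absurd htt1 (not_lt.2 (csInf_le hbddBrest ⟨h, hc⟩))
      have ht1 : f γ.head! < t := by
        obtain ⟨z, hz⟩ := hCne
        exact lt_trans (hDIoo (hCsub hz)).1 (lt_of_le_of_lt (le_csSup hCbdd hz) ht0t)
      have ht2 : t < f γ.getLast! := by
        obtain ⟨y, hy⟩ := hrest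
        exact lt_trans (lt_of_lt_of_le htt1 (csInf_le hbddBrest hy)) (hDIoo hy.1).2
      rcases hagree_of t htD ht1 ht2 with ⟨v, hvγ, -, hfv⟩ |
        ⟨a, b, la, lb, ma, mb, hsa, hsb, hfa, hfb⟩
      · exfalso
        apply htV
        simp only [Finset.mem_coe, List.mem_toFinset, List.mem_map]
        exact ⟨v, by simp [hvγ], hfv⟩
      · refine ⟨b, la ++ [a], lb, ma ++ [a], mb, by rw [hsa]; simp, by rw [hsb]; simp,
          ?_, ?_⟩
        · intro z hz
          exact lt_trans (lt_of_le_of_lt (le_csSup hCbdd hz) ht0t) hfb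
        · intro y hy
          by_contra hyb
          push_neg at hyb
          have hya : f a < y := lt_trans hfa (lt_of_lt_of_le htt1 (csInf_le hbddBrest hy))
          exact hIoc a b la lb ma mb hsa hsb y hya hyb hy.1
    · -- the components touch; the touching level is an agreement level
      have ht0D : sSup (connectedComponentIn D x₀) ∉ D := by
        intro h
        have h1 : sSup (connectedComponentIn D x₀) ∈ connectedComponentIn D x₀ :=
          closure_compIn hx₀D h (csSup_mem_closure hCne hCbdd)
        have h2 : sSup (connectedComponentIn D x₀) ∈ D \ connectedComponentIn D x₀ := by
          apply closure_compIn_compl hx₀D h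
          rw [hcase]
          exact csInf_mem_closure hrest hbddBrest
        exact h2.2 h1
      have hzlt : ∀ z ∈ connectedComponentIn D x₀, z < sSup (connectedComponentIn D x₀) :=
        fun z hz => lt_of_le_of_ne (le_csSup hCbdd hz) (fun he => ht0D (he ▸ hCsub hz))
      have hygt : ∀ y ∈ D \ connectedComponentIn D x₀,
          sSup (connectedComponentIn D x₀) < y := by
        intro y hy
        refine lt_of_le_of_ne (by rw [hcase]; exact csInf_le hbddBrest hy) ?_
        intro he
        exact ht0D (he ▸ hy.1)
      have ht1 : f γ.head! < sSup (connectedComponentIn D x₀) := by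
        obtain ⟨z, hz⟩ := hCne
        exact lt_trans (hDIoo (hCsub hz)).1 (hzlt z hz)
      have ht2 : sSup (connectedComponentIn D x₀) < f γ.getLast! := by
        obtain ⟨y, hy⟩ := hrest
        exact lt_trans (hygt y hy) (hDIoo hy.1).2
      rcases hagree_of _ ht0D ht1 ht2 with ⟨v, hvγ, hvγ', hfv⟩ |
        ⟨a, b, la, lb, ma, mb, hsa, hsb, hfa, hfb⟩
      · obtain ⟨l₁, l₂, hsγ⟩ := List.append_of_mem hvγ
        obtain ⟨m₁, m₂, hsγ'⟩ := List.append_of_mem hvγ'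
        exact ⟨v, l₁, l₂, m₁, m₂, hsγ, hsγ',
          by rw [hfv]; exact hzlt, by rw [hfv]; exact hygt⟩
      · exfalso
        obtain ⟨y, hy, hyb⟩ := exists_lt_of_csInf_lt hrest (by rw [← hcase]; exact hfb)
        have hya : f a < y := lt_trans hfa (hygt y hy)
        exact hIoc a b la lb ma mb hsa hsb y hya hyb.le hy.1
  obtain ⟨v, l₁, l₂, m₁, m₂, hsγ, hsγ', hvlow, hvhigh⟩ := hkey
  obtain ⟨y₀, hy₀⟩ := hrest
  have hfvL : f v < f γ.getLast! := lt_trans (hvhigh y₀ hy₀) (hDIoo hy₀.1).2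
  have hsingleton : ∀ w : V3, ([w] : List V3).getLast! = w := fun w => rfl
  have hl₂ : l₂ ≠ [] := by
    rintro rfl
    have h1 : γ.getLast! = v := by
      rw [hsγ, getLast!_append_cons, hsingleton]
    rw [h1] at hfvL
    exact lt_irrefl _ hfvL
  have hm₂ : m₂ ≠ [] := by
    rintro rfl
    have h1 : γ'.getLast! = v := by
      rw [hsγ', getLast!_append_cons, hsingleton]
    rw [← hlasts] at h1
    rw [h1] at hfvL
    exact lt_irrefl _ hfvL
  obtain ⟨hσ, -, -⟩ := splice_path hγ hγ' hsγ hsγ'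
  have hsubσ : edgeUnion (m₁ ++ v :: l₂) ⊆ P := path_convex_subset hPC hσ.2.1
  have hlow := splice_disagree_lower hγ hγ' hσ hsγ hsγ' hl₂ hsub hsub' hsubσ
  have hup := splice_disagree_upper hγ hγ' hσ hsγ hsγ' hl₂ hm₂ hsub hsub' hsubσ
  have hDlow : D ∩ Set.Iio (f v) = connectedComponentIn D x₀ := by
    apply Set.Subset.antisymm
    · rintro x ⟨hxD, hxlt⟩
      by_contra hxC
      exact absurd hxlt (not_lt.2 (hvhigh x ⟨hxD, hxC⟩).le)
    · intro z hz
      exact ⟨hCsub hz, hvlow z hz⟩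
  have hDup : D ∩ Set.Ioi (f v) = D \ connectedComponentIn D x₀ := by
    apply Set.Subset.antisymm
    · rintro x ⟨hxD, hxgt⟩
      refine ⟨hxD, fun hxC => ?_⟩
      exact absurd hxgt (not_lt.2 (hvlow x hxC).le)
    · intro y hy
      exact ⟨hy.1, hvhigh y hy⟩
  refine ⟨m₁ ++ v :: l₂, hσ, ?_, ?_⟩
  · show Nat.card (ConnectedComponents (disagreeSet P f γ (m₁ ++ v :: l₂))) = 1
    rw [hlow, ← hD, hDlow]
    exact cc_card_one hCconn
  · show Nat.card (ConnectedComponents (disagreeSet P f (m₁ ++ v :: l₂) γ')) =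
      Nat.card (ConnectedComponents (disagreeSet P f γ γ')) - 1
    rw [hup, ← hD, hDup, card_cc (D \ connectedComponentIn D x₀),
      image_compIn_remove hx₀D, Nat.card_coe_set_eq,
      Set.ncard_diff_singleton_of_mem (Set.mem_image_of_mem _ hx₀D),
      ← Nat.card_coe_set_eq, hcard, hD]

end NuAux

namespace NuAux

variable {f : V3 →ₗ[ℝ] ℝ} {P : Set V3}

lemma main_aux (hP : IsPolytope3 P) (hf : Generic P f) :
    ∀ (n : ℕ) (γ γ' : List V3), IsMonotonePath P f γ → IsMonotonePath P f γ' →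
      nu P f γ γ' = n + 1 →
      ∃ g : Fin (n + 2) → List V3, g 0 = γ ∧ g (Fin.last (n + 1)) = γ' ∧
        (∀ i, IsMonotonePath P f (g i)) ∧
        ∀ i : Fin (n + 1), nu P f (g i.castSucc) (g i.succ) = 1 := by
  intro n
  induction n with
  | zero =>
    intro γ γ' hγ hγ' hν
    refine ⟨![γ, γ'], rfl, rfl, ?_, ?_⟩
    · intro i; fin_cases i
      · exact hγ
      · exact hγ'
    · intro i; fin_cases i
      simpa using hν
  | succ n ih =>
    intro γ γ' hγ hγ' hν
    have hge : 2 ≤ Nat.card (ConnectedComponents (disagreeSet P f γ γ')) := by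
      unfold nu at hν
      omega
    obtain ⟨σ, hσ, h1, h2⟩ := step hP hf hγ hγ' hge
    have hν' : nu P f σ γ' = n + 1 := by rw [h2, hν]; omega
    obtain ⟨h, hh0, hhl, hhp, hhc⟩ := ih σ γ' hσ hγ' hν'
    refine ⟨Fin.cons γ h, Fin.cons_zero _ _, ?_, ?_, ?_⟩
    · have he : Fin.last (n + 2) = (Fin.last (n + 1)).succ := (Fin.succ_last _).symm
      rw [he, Fin.cons_succ]
      exact hhl
    · intro i
      refine Fin.cases ?_ ?_ i
      · rw [Fin.cons_zero]; exact hγ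
      · intro j; rw [Fin.cons_succ]; exact hhp j
    · intro i
      refine Fin.cases ?_ ?_ i
      · have e1 : (0 : Fin (n + 2)).castSucc = 0 := rfl
        rw [e1, Fin.cons_zero, Fin.cons_succ, hh0]
        exact h1
      · intro j
        have e1 : (j.succ).castSucc = (j.castSucc).succ := (Fin.succ_castSucc j).symm
        rw [e1, Fin.cons_succ, Fin.cons_succ]
        exact hhc j

end NuAux


/-- If `ν(γ, γ') = ν ≥ 1` then there are `f`-monotone paths
`γ = γ_0, γ_1, ..., γ_ν = γ'` with `ν(γ_{i-1}, γ_i) = 1` for every `i`. -/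
theorem nu_decomposition (P : Set V3) (hP : IsPolytope3 P) (f : V3 →ₗ[ℝ] ℝ)
    (hf : Generic P f) (γ γ' : List V3)
    (hγ : IsMonotonePath P f γ) (hγ' : IsMonotonePath P f γ')
    (ν : ℕ) (hν : nu P f γ γ' = ν) (hν1 : 1 ≤ ν) :
    ∃ g : Fin (ν + 1) → List V3,
      g 0 = γ ∧ g (Fin.last ν) = γ' ∧ (∀ i, IsMonotonePath P f (g i)) ∧
      ∀ i : Fin ν, nu P f (g i.castSucc) (g i.succ) = 1 := by
  obtain ⟨n, rfl⟩ : ∃ n, ν = n + 1 := ⟨ν - 1, (Nat.succ_pred_eq_of_pos hν1).symm⟩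
  exact NuAux.main_aux hP hf n γ γ' hγ hγ' hν

end
end

section
/- Let Q = (ζ_0, ζ_1, ..., ζ_q) and R = (η_0, η_1, ..., η_r) be two walks in graphs K and L respectively, and suppose compatibility data allows concatenating nodes ζ_i ∗ η_j into nodes of a graph H whenever the terminal edge of ζ_i and initial edge of η_j have equal images under given simplicial maps α and β. If α(Q') = β(R') for the induced walks Q', R' in the common target graph, then the sequence of nodes defined by starting at ζ_0 ∗ η_0 and repeatedly moving to ζ_{i+1} ∗ η_j if defined, else to ζ_i ∗ η_{j+1} if defined, else to ζ_{i+1} ∗ η_{j+1}, is a well-defined walk in H from ζ_0 ∗ η_0 to ζ_q ∗ η_r. -/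
/-- A simplicial map of graphs: each edge is sent to an edge or contracted to a node. -/
def SimplicialMap {VA VB : Type*} (A : SimpleGraph VA) (B : SimpleGraph VB)
    (φ : VA → VB) : Prop :=
  ∀ x y : VA, A.Adj x y → B.Adj (φ x) (φ y) ∨ φ x = φ y

/-- The graph `H` of concatenations: nodes are pairs `ζ ∗ η` (well-defined when the
compatibility condition holds) and steps move one or both coordinates along an edge. -/
def PatchGraph {VK VL : Type*} (K : SimpleGraph VK) (L : SimpleGraph VL)
    (Compat : VK → VL → Prop) : SimpleGraph (VK × VL) :=
  SimpleGraph.fromRel fun p p' =>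
    Compat p.1 p.2 ∧ Compat p'.1 p'.2 ∧
      ((K.Adj p.1 p'.1 ∧ p.2 = p'.2) ∨ (p.1 = p'.1 ∧ L.Adj p.2 p'.2) ∨
        (K.Adj p.1 p'.1 ∧ L.Adj p.2 p'.2))

/-! ### Auxiliary lemmas about destuttered tails of walks -/

theorem destutter'_head_aux {α : Type*} (R : α → α → Prop) [DecidableRel R] :
    ∀ (l : List α) (a : α), ∃ t, l.destutter' R a = a :: t
  | [], a => ⟨[], rfl⟩
  | b :: l, a => by
    rw [List.destutter'_cons]
    split
    · exact ⟨_, rfl⟩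
    · exact destutter'_head_aux R l a

/-- The destuttered image of the tail of a walk, starting at index `i`. -/
def TailD {VG : Type*} [DecidableEq VG] (h : ℕ → VG) (n i : ℕ) : List VG :=
  ((List.range (n - i + 1)).map (fun t => h (i + t))).destutter (· ≠ ·)

theorem tail_list_cons {VG : Type*} (h : ℕ → VG) (n i : ℕ) :
    (List.range (n - i + 1)).map (fun t => h (i + t))
      = h i :: (List.range (n - i)).map (fun t => h (i + 1 + t)) := by
  rw [List.range_succ_eq_map, List.map_cons]
  refine List.cons_eq_cons.mpr ⟨by simp, ?_⟩
  rw [List.map_map]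
  apply List.map_congr_left
  intro t _
  simp only [Function.comp_apply]
  congr 1
  omega

theorem TailD_head {VG : Type*} [DecidableEq VG] (h : ℕ → VG) (n i : ℕ) :
    ∃ t, TailD h n i = h i :: t := by
  rw [TailD, tail_list_cons, List.destutter_cons']
  exact destutter'_head_aux _ _ _

theorem TailD_last {VG : Type*} [DecidableEq VG] (h : ℕ → VG) (n : ℕ) :
    TailD h n n = [h n] := by
  simp only [TailD, Nat.sub_self]
  simp [List.range_succ]

theorem TailD_zero {VG : Type*} [DecidableEq VG] (h : ℕ → VG) (n : ℕ) :
    TailD h n 0 = (List.ofFn fun t : Fin (n + 1) => h t).destutter (· ≠ ·) := by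
  rw [TailD]
  congr 1
  apply List.ext_getElem
  · simp
  · intro t h1 h2
    simp only [List.getElem_map, List.getElem_range, List.getElem_ofFn, Nat.zero_add]

theorem TailD_eq {VG : Type*} [DecidableEq VG] (h : ℕ → VG) {n i : ℕ}
    (hi : i < n) (he : h (i + 1) = h i) : TailD h n (i + 1) = TailD h n i := by
  rw [TailD, TailD, tail_list_cons h n i,
    show n - i = n - (i + 1) + 1 from by omega, tail_list_cons h n (i + 1),
    List.destutter_cons_cons, if_neg (by simp [he]), List.destutter_cons', he]

theorem TailD_ne {VG : Type*} [DecidableEq VG] (h : ℕ → VG) {n i : ℕ}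
    (hi : i < n) (he : h (i + 1) ≠ h i) : TailD h n i = h i :: TailD h n (i + 1) := by
  rw [TailD, TailD, tail_list_cons h n i,
    show n - i = n - (i + 1) + 1 from by omega, tail_list_cons h n (i + 1),
    List.destutter_cons_cons, if_pos (Ne.symm he), List.destutter_cons']

/-! ### The greedy step function -/

open Classical in
/-- The greedy step: move in the first coordinate if well defined, else in the second,
else in both. -/
noncomputable def pStep (q r : ℕ) (A B : ℕ → ℕ → Prop) (p : ℕ × ℕ) : ℕ × ℕ :=
  if p.1 < q ∧ A p.1 p.2 then (p.1 + 1, p.2)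
  else if p.2 < r ∧ B p.1 p.2 then (p.1, p.2 + 1)
  else (p.1 + 1, p.2 + 1)

theorem pStep_eq1 {q r : ℕ} {A B : ℕ → ℕ → Prop} {p : ℕ × ℕ}
    (h : p.1 < q ∧ A p.1 p.2) : pStep q r A B p = (p.1 + 1, p.2) := by
  unfold pStep; rw [if_pos h]

theorem pStep_eq2 {q r : ℕ} {A B : ℕ → ℕ → Prop} {p : ℕ × ℕ}
    (h1 : ¬(p.1 < q ∧ A p.1 p.2)) (h2 : p.2 < r ∧ B p.1 p.2) :
    pStep q r A B p = (p.1, p.2 + 1) := by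
  unfold pStep; rw [if_neg h1, if_pos h2]

theorem pStep_eq3 {q r : ℕ} {A B : ℕ → ℕ → Prop} {p : ℕ × ℕ}
    (h1 : ¬(p.1 < q ∧ A p.1 p.2)) (h2 : ¬(p.2 < r ∧ B p.1 p.2)) :
    pStep q r A B p = (p.1 + 1, p.2 + 1) := by
  unfold pStep; rw [if_neg h1, if_neg h2]

/-- Patching two walks `Q = (ζ_0, ..., ζ_q)` and `R = (η_0, ..., η_r)` whose images
under the simplicial maps `α`, `β` agree (as walks in the common target graph, i.e.
after disregarding contracted edges): the greedy sequence which starts at `ζ_0 ∗ η_0`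
and moves to `ζ_{i+1} ∗ η_j` if well defined, else to `ζ_i ∗ η_{j+1}` if well defined,
else to `ζ_{i+1} ∗ η_{j+1}`, is a well-defined walk in `H` from `ζ_0 ∗ η_0` to
`ζ_q ∗ η_r`. -/
theorem patching_walks {VK VL VG : Type*} [DecidableEq VG]
    (K : SimpleGraph VK) (L : SimpleGraph VL) (GM : SimpleGraph VG)
    (α : VK → VG) (β : VL → VG)
    (hα : SimplicialMap K GM α) (hβ : SimplicialMap L GM β)
    (Compat : VK → VL → Prop) (hCompat : ∀ x y, Compat x y ↔ α x = β y)
    (q r : ℕ) (ζ : ℕ → VK) (η : ℕ → VL)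
    (hζ : ∀ i < q, K.Adj (ζ i) (ζ (i + 1)))
    (hη : ∀ j < r, L.Adj (η j) (η (j + 1)))
    (h0 : Compat (ζ 0) (η 0)) (hqr : Compat (ζ q) (η r))
    (hpatch : (List.ofFn fun i : Fin (q + 1) => α (ζ i)).destutter (· ≠ ·)
            = (List.ofFn fun j : Fin (r + 1) => β (η j)).destutter (· ≠ ·)) :
    ∃ (m : ℕ) (I J : ℕ → ℕ),
      I 0 = 0 ∧ J 0 = 0 ∧ I m = q ∧ J m = r ∧
      (∀ l ≤ m, Compat (ζ (I l)) (η (J l))) ∧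
      (∀ l < m, (PatchGraph K L Compat).Adj (ζ (I l), η (J l))
        (ζ (I (l + 1)), η (J (l + 1)))) ∧
      ∀ l < m,
        ((I l < q ∧ Compat (ζ (I l + 1)) (η (J l)) →
            I (l + 1) = I l + 1 ∧ J (l + 1) = J l) ∧
         (¬(I l < q ∧ Compat (ζ (I l + 1)) (η (J l))) ∧
            (J l < r ∧ Compat (ζ (I l)) (η (J l + 1))) →
            I (l + 1) = I l ∧ J (l + 1) = J l + 1) ∧
         (¬(I l < q ∧ Compat (ζ (I l + 1)) (η (J l))) ∧
            ¬(J l < r ∧ Compat (ζ (I l)) (η (J l + 1))) →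
            I (l + 1) = I l + 1 ∧ J (l + 1) = J l + 1)) := by
  classical
  -- abbreviations
  set fa : ℕ → VG := fun i => α (ζ i) with hfa
  set fb : ℕ → VG := fun j => β (η j) with hfb
  set A : ℕ → ℕ → Prop := fun i j => Compat (ζ (i + 1)) (η j) with hA
  set B : ℕ → ℕ → Prop := fun i j => Compat (ζ i) (η (j + 1)) with hB
  set st : ℕ × ℕ → ℕ × ℕ := pStep q r A B with hst
  -- heads of the destuttered tails agree
  have head_eq : ∀ i j : ℕ, TailD fa q i = TailD fb r j → α (ζ i) = β (η j) := by
    intro i j hij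
    obtain ⟨t1, h1⟩ := TailD_head fa q i
    obtain ⟨t2, h2⟩ := TailD_head fb r j
    rw [h1, h2] at hij
    exact (List.cons_eq_cons.mp hij).1
  -- the key one-step lemma
  have key : ∀ i j : ℕ, i ≤ q → j ≤ r → TailD fa q i = TailD fb r j →
      ¬(i = q ∧ j = r) →
      ∃ i' j' : ℕ, st (i, j) = (i', j') ∧ i' ≤ q ∧ j' ≤ r ∧
        TailD fa q i' = TailD fb r j' ∧
        (q - i') + (r - j') < (q - i) + (r - j) ∧
        (PatchGraph K L Compat).Adj (ζ i, η j) (ζ i', η j') := by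
    intro i j hi hj hD hne
    have hij : α (ζ i) = β (η j) := head_eq i j hD
    by_cases hc1 : i < q ∧ Compat (ζ (i + 1)) (η j)
    · refine ⟨i + 1, j, pStep_eq1 hc1, hc1.1, hj, ?_, by omega, ?_⟩
      · have he : fa (i + 1) = fa i := by
          show α (ζ (i + 1)) = α (ζ i)
          rw [(hCompat _ _).mp hc1.2, hij]
        rw [TailD_eq fa hc1.1 he, hD]
      · rw [PatchGraph, SimpleGraph.fromRel_adj]
        refine ⟨fun hpe => (hζ i hc1.1).ne (congrArg Prod.fst hpe),
          Or.inl ⟨(hCompat _ _).mpr hij, hc1.2, Or.inl ⟨hζ i hc1.1, rfl⟩⟩⟩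
    · by_cases hc2 : j < r ∧ Compat (ζ i) (η (j + 1))
      · refine ⟨i, j + 1, pStep_eq2 hc1 hc2, hi, hc2.1, ?_, by omega, ?_⟩
        · have he : fb (j + 1) = fb j := by
            show β (η (j + 1)) = β (η j)
            rw [← (hCompat _ _).mp hc2.2, hij]
          rw [TailD_eq fb hc2.1 he, hD]
        · rw [PatchGraph, SimpleGraph.fromRel_adj]
          refine ⟨fun hpe => (hη j hc2.1).ne (congrArg Prod.snd hpe),
            Or.inl ⟨(hCompat _ _).mpr hij, hc2.2, Or.inr (Or.inl ⟨rfl, hη j hc2.1⟩)⟩⟩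
      · -- diagonal case: first show i < q and j < r
        have hiq : i < q := by
          rcases Nat.lt_or_ge i q with h | h
          · exact h
          · exfalso
            have hieq : i = q := le_antisymm hi h
            have hjr : j < r := by
              rcases Nat.lt_or_ge j r with h' | h'
              · exact h'
              · exact absurd ⟨hieq, le_antisymm hj h'⟩ hne
            by_cases hbe : fb (j + 1) = fb j
            · exact hc2 ⟨hjr, (hCompat _ _).mpr (by
                show α (ζ i) = β (η (j + 1))
                rw [hij]; exact (show fb (j + 1) = fb j from hbe).symm)⟩
            · have h1 := TailD_ne fb hjr hbe
              rw [← hD, hieq, TailD_last] at h1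
              obtain ⟨t, ht⟩ := TailD_head fb r (j + 1)
              rw [ht] at h1
              exact absurd (List.cons_eq_cons.mp h1).2.symm (List.cons_ne_nil _ _)
        have hjr : j < r := by
          rcases Nat.lt_or_ge j r with h' | h'
          · exact h'
          · exfalso
            have hjeq : j = r := le_antisymm hj h'
            by_cases hae : fa (i + 1) = fa i
            · exact hc1 ⟨hiq, (hCompat _ _).mpr (by
                show α (ζ (i + 1)) = β (η j)
                rw [show α (ζ (i+1)) = α (ζ i) from hae, hij])⟩
            · have h1 := TailD_ne fa hiq hae
              rw [hD, hjeq, TailD_last] at h1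
              obtain ⟨t, ht⟩ := TailD_head fa q (i + 1)
              rw [ht] at h1
              exact absurd (List.cons_eq_cons.mp h1).2.symm (List.cons_ne_nil _ _)
        have hane : fa (i + 1) ≠ fa i := by
          intro hae
          exact hc1 ⟨hiq, (hCompat _ _).mpr (by
            show α (ζ (i + 1)) = β (η j)
            rw [show α (ζ (i+1)) = α (ζ i) from hae, hij])⟩
        have hbne : fb (j + 1) ≠ fb j := by
          intro hbe
          exact hc2 ⟨hjr, (hCompat _ _).mpr (by
            show α (ζ i) = β (η (j + 1))
            rw [hij]; exact (show fb (j + 1) = fb j from hbe).symm)⟩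
        have hD' : TailD fa q (i + 1) = TailD fb r (j + 1) := by
          have h1 := TailD_ne fa hiq hane
          have h2 := TailD_ne fb hjr hbne
          rw [h1, h2] at hD
          exact (List.cons_eq_cons.mp hD).2
        refine ⟨i + 1, j + 1, pStep_eq3 hc1 hc2, hiq, hjr, hD', by omega, ?_⟩
        rw [PatchGraph, SimpleGraph.fromRel_adj]
        refine ⟨fun hpe => (hζ i hiq).ne (congrArg Prod.fst hpe),
          Or.inl ⟨(hCompat _ _).mpr hij, (hCompat _ _).mpr (head_eq _ _ hD'),
            Or.inr (Or.inr ⟨hζ i hiq, hη j hjr⟩)⟩⟩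
  -- the walk reaches (q, r)
  have reach : ∀ n i j : ℕ, i ≤ q → j ≤ r → TailD fa q i = TailD fb r j →
      (q - i) + (r - j) ≤ n → ∃ m : ℕ, st^[m] (i, j) = (q, r) := by
    intro n
    induction n with
    | zero =>
      intro i j hi hj hD hn
      have h1 : i = q ∧ j = r := by omega
      exact ⟨0, by simp [h1.1, h1.2]⟩
    | succ n ih =>
      intro i j hi hj hD hn
      by_cases hqr' : i = q ∧ j = r
      · exact ⟨0, by simp [hqr'.1, hqr'.2]⟩
      · obtain ⟨i', j', hs, h1, h2, h3, h4, _⟩ := key i j hi hj hD hqr'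
        obtain ⟨m', hm'⟩ := ih i' j' h1 h2 h3 (by omega)
        exact ⟨m' + 1, by rw [Function.iterate_succ_apply, hs]; exact hm'⟩
  have hD0 : TailD fa q 0 = TailD fb r 0 := by
    rw [TailD_zero, TailD_zero]; exact hpatch
  obtain ⟨m0, hm0⟩ := reach (q + r) 0 0 (Nat.zero_le _) (Nat.zero_le _) hD0 (by omega)
  have hex : ∃ m : ℕ, st^[m] (0, 0) = (q, r) := ⟨m0, hm0⟩
  set m := Nat.find hex with hm
  have hmspec : st^[m] (0, 0) = (q, r) := Nat.find_spec hex
  have hmin : ∀ l, l < m → st^[l] (0, 0) ≠ (q, r) := fun l hl => Nat.find_min hex hl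
  set F : ℕ → ℕ × ℕ := fun l => st^[l] (0, 0) with hF
  have hFs : ∀ l : ℕ, F (l + 1) = st (F l) := fun l => Function.iterate_succ_apply' st l (0, 0)
  -- invariant along the walk
  have goodF : ∀ l, l ≤ m → (F l).1 ≤ q ∧ (F l).2 ≤ r ∧
      TailD fa q (F l).1 = TailD fb r (F l).2 := by
    intro l
    induction l with
    | zero => exact fun _ => ⟨Nat.zero_le _, Nat.zero_le _, hD0⟩
    | succ l ih =>
      intro hl
      obtain ⟨h1, h2, h3⟩ := ih (by omega)
      have hne : ¬((F l).1 = q ∧ (F l).2 = r) := by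
        intro hc
        exact hmin l (by omega) (by rw [show (st^[l] (0,0) : ℕ × ℕ) = F l from rfl,
          ← hc.1, ← hc.2])
      obtain ⟨i', j', hs, g1, g2, g3, _, _⟩ := key (F l).1 (F l).2 h1 h2 h3 hne
      have hFl : F (l + 1) = (i', j') := by rw [hFs l, ← hs]
      rw [hFl]
      exact ⟨g1, g2, g3⟩
  refine ⟨m, fun l => (F l).1, fun l => (F l).2, rfl, rfl,
    congrArg Prod.fst hmspec, congrArg Prod.snd hmspec, ?_, ?_, ?_⟩
  · -- Compat along the walk
    intro l hl
    obtain ⟨_, _, h3⟩ := goodF l hl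
    exact (hCompat _ _).mpr (head_eq _ _ h3)
  · -- adjacency
    intro l hl
    beta_reduce
    obtain ⟨h1, h2, h3⟩ := goodF l (le_of_lt hl)
    have hne : ¬((F l).1 = q ∧ (F l).2 = r) := by
      intro hc
      exact hmin l hl (by rw [show (st^[l] (0,0) : ℕ × ℕ) = F l from rfl, ← hc.1, ← hc.2])
    obtain ⟨i', j', hs, g1, g2, g3, g4, g5⟩ := key (F l).1 (F l).2 h1 h2 h3 hne
    have hFl : F (l + 1) = (i', j') := by rw [hFs l, ← hs]
    rw [hFl]
    exact g5
  · -- the greedy specification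
    intro l hl
    beta_reduce
    have hFl : F (l + 1) = st (F l) := hFs l
    by_cases hc1 : (F l).1 < q ∧ Compat (ζ ((F l).1 + 1)) (η ((F l).2))
    · have hs : st (F l) = ((F l).1 + 1, (F l).2) := pStep_eq1 hc1
      rw [hFl, hs]
      exact ⟨fun _ => ⟨rfl, rfl⟩, fun h => absurd hc1 h.1, fun h => absurd hc1 h.1⟩
    · by_cases hc2 : (F l).2 < r ∧ Compat (ζ ((F l).1)) (η ((F l).2 + 1))
      · have hs : st (F l) = ((F l).1, (F l).2 + 1) := pStep_eq2 hc1 hc2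
        rw [hFl, hs]
        exact ⟨fun h => absurd h hc1, fun _ => ⟨rfl, rfl⟩, fun h => absurd hc2 h.2⟩
      · have hs : st (F l) = ((F l).1 + 1, (F l).2 + 1) := pStep_eq3 hc1 hc2
        rw [hFl, hs]
        exact ⟨fun h => absurd h hc1, fun h => absurd h.2 hc2, fun _ => ⟨rfl, rfl⟩⟩
end

section
/- Let n ≥ 1 and consider a zig-zag diagram G_{0,1} → G_1 ← G_{1,2} → G_2 ← ... → G_{n-1} ← G_{n-1,n} of graphs and simplicial maps in which every graph G_{i-1,i} and G_i is either a path graph or a cycle graph. Given two nodes x_i, y_i in each G_{i-1,i}, suppose for each i there is a walk P_i in G_{i-1,i} from x_i to y_i traversing each edge of G_{i-1,i} exactly once, and that α_i(P_i) = β_i(P_{i+1}) for all i ∈ [n−1], where α_i, β_i are the maps into G_i. Then there exists a walk in the inverse limit graph of the diagram, from the node determined by (x_1, ..., x_n) to the node determined by (y_1, ..., y_n), whose projection to each G_{i-1,i} equals P_i. -/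
open scoped Classical

section Helpers
variable {V : Type*}

lemma stepMono {t : ℕ → ℕ} {m : ℕ}
    (h : ∀ l < m, t (l + 1) = t l ∨ t (l + 1) = t l + 1) :
    ∀ b ≤ m, ∀ a ≤ b, t a ≤ t b := by
  intro b
  induction b with
  | zero => intro _ a ha; interval_cases a; exact le_rfl
  | succ b ih =>
    intro hb a ha
    rcases Nat.lt_or_ge a (b + 1) with h' | h'
    · have h1 := ih (by omega) a (by omega)
      rcases h b (by omega) with e | e <;> omega
    · have : a = b + 1 := by omega
      subst this; exact le_rfl

lemma destutter_ofFn [DecidableEq V] (g : ℕ → V) :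
    ∀ (m : ℕ) (t : ℕ → ℕ) (o : ℕ), t 0 = 0 →
    (∀ l < m, t (l + 1) = t l ∨ t (l + 1) = t l + 1) →
    (∀ j < t m, g (o + j) ≠ g (o + (j + 1))) →
    (List.ofFn fun l : Fin (m + 1) => g (o + t l)).destutter (· ≠ ·)
      = List.ofFn fun j : Fin (t m + 1) => g (o + j) := by
  have dcc : ∀ (A B : V) (l : List V), A ≠ B →
      (A :: B :: l).destutter (· ≠ ·) = A :: (B :: l).destutter (· ≠ ·) := by
    intro A B l h
    rw [List.destutter_cons_cons, if_pos h, List.destutter_cons']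
  have dcc2 : ∀ (A : V) (l : List V),
      (A :: A :: l).destutter (· ≠ ·) = (A :: l).destutter (· ≠ ·) := by
    intro A l
    rw [List.destutter_cons_cons, if_neg (by simp), List.destutter_cons']
  intro m
  induction m with
  | zero =>
    intro t o ht0 _ _
    simp [ht0]
  | succ m ih =>
    intro t o ht0 hstep hg
    have hmono := stepMono hstep
    have lhs1 : (List.ofFn fun l : Fin (m + 2) => g (o + t l))
        = g (o + t 0) :: g (o + t 1) :: List.ofFn (fun l : Fin m => g (o + t (l + 2))) := by
      rw [List.ofFn_succ, List.ofFn_succ]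
      simp [Fin.val_succ]
    rcases hstep 0 (Nat.succ_pos m) with h1 | h1
    · -- t 1 = t 0 = 0
      have key := ih (fun l => t (l + 1)) o (by simpa [ht0] using h1)
        (fun l hl => hstep (l + 1) (by omega)) hg
      rw [lhs1, ht0, h1, ht0, dcc2]
      rw [List.ofFn_succ] at key ⊢
      convert key using 3
      · simp [ht0, h1]
      · simp
      · simp [List.ofFn_succ]
    · -- t 1 = t 0 + 1 = 1
      have h1' : t 1 = 1 := by rw [ht0] at h1; simpa using h1
      set t' : ℕ → ℕ := fun l => t (l + 1) - 1 with ht'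
      have hge1 : ∀ l ≤ m, 1 ≤ t (l + 1) := by
        intro l hl
        have := hmono (l + 1) (by omega) 1 (by omega)
        omega
      have ht'step : ∀ l < m, t' (l + 1) = t' l ∨ t' (l + 1) = t' l + 1 := by
        intro l hl
        have e := hstep (l + 1) (by omega)
        have := hge1 l (by omega)
        simp only [ht']
        omega
      have htm1 : t (m + 1) = t' m + 1 := by
        have := hge1 m le_rfl; simp only [ht']; omega
      have key := ih t' (o + 1) (by simp only [ht', Nat.zero_add]; omega) ht'step
        (by
          intro j hj
          have h2 : j + 1 < t (m + 1) + 1 := by omega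
          have := hg (j + 1) (by omega)
          have e1 : o + (j + 1) = o + 1 + j := by omega
          have e2 : o + (j + 1 + 1) = o + 1 + (j + 1) := by omega
          rw [e1, e2] at this
          exact this)
      have hne : g (o + t 0) ≠ g (o + t 1) := by
        rw [ht0, h1']
        have := hg 0 (by omega)
        simpa using this
      rw [lhs1, dcc _ _ _ hne]
      have lhs2 : (g (o + t 1) :: List.ofFn fun l : Fin m => g (o + t (↑l + 2)))
          = List.ofFn fun l : Fin (m + 1) => g (o + 1 + t' ↑l) := by
        rw [List.ofFn_succ]
        congr 1
        · simp only [Fin.val_zero, ht', Nat.zero_add]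
          congr 1
          omega
        · apply List.ofFn_inj.mpr
          funext l
          have h5 : (1:ℕ) ≤ t (↑l + 2) := hge1 (↑l + 1) (by omega)
          have e3 : t' ↑l.succ = t (↑l + 2) - 1 := rfl
          rw [e3]
          congr 1
          omega
      rw [lhs2, key]
      rw [ht0, htm1]
      conv_rhs => rw [List.ofFn_succ]
      congr 1
      apply List.ofFn_inj.mpr
      funext j
      simp only [Fin.val_succ]
      congr 1
      omega

lemma exists_param (f : ℕ → V) (m : ℕ) :
    ∃ (K : ℕ) (g : ℕ → V) (t : ℕ → ℕ), t 0 = 0 ∧ t m = K ∧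
      (∀ l < m, t (l + 1) = t l ∨ t (l + 1) = t l + 1) ∧
      (∀ j < K, g j ≠ g (j + 1)) ∧
      (∀ l ≤ m, f l = g (t l)) := by
  induction m with
  | zero =>
    refine ⟨0, fun _ => f 0, fun _ => 0, rfl, rfl, by omega, by omega, ?_⟩
    intro l hl
    interval_cases l
    rfl
  | succ m ih =>
    obtain ⟨K, g, t, ht0, htm, hstep, hgd, hval⟩ := ih
    have hmono := stepMono hstep
    by_cases he : f (m + 1) = g (t m)
    · refine ⟨K, g, fun l => if l ≤ m then t l else t m, by simp [ht0], ?_, ?_, hgd, ?_⟩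
      · simp [htm]
      · intro l hl
        rcases Nat.lt_or_ge l m with h' | h'
        · have c1 : l ≤ m := by omega
          have c2 : l + 1 ≤ m := by omega
          simp only [c1, c2, if_true]
          exact hstep l h'
        · have : l = m := by omega
          subst this
          simp
      · intro l hl
        rcases Nat.lt_or_ge l (m + 1) with h' | h'
        · have c1 : l ≤ m := by omega
          simp only [c1, if_true]
          exact hval l (by omega)
        · have : l = m + 1 := by omega
          subst this
          have c1 : ¬ (m + 1 ≤ m) := by omega
          simp only [c1, if_false]
          exact he
    · refine ⟨K + 1, fun j => if j ≤ K then g j else f (m + 1),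
        fun l => if l ≤ m then t l else K + 1, by simp [ht0], ?_, ?_, ?_, ?_⟩
      · simp
      · intro l hl
        rcases Nat.lt_or_ge l m with h' | h'
        · have c1 : l ≤ m := by omega
          have c2 : l + 1 ≤ m := by omega
          simp only [c1, c2, if_true]
          exact hstep l h'
        · have : l = m := by omega
          subst this
          right
          have c1 : ¬ (l + 1 ≤ l) := by omega
          simp only [le_refl, if_true, c1, if_false, htm]
      · intro j hj
        rcases Nat.lt_or_ge j K with h' | h'
        · have c1 : j ≤ K := by omega
          have c2 : j + 1 ≤ K := by omega
          simp only [c1, c2, if_true]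
          exact hgd j h'
        · have : j = K := by omega
          subst this
          have c1 : ¬ (j + 1 ≤ j) := by omega
          simp only [le_refl, if_true, c1, if_false]
          intro hc
          exact he (by rw [htm, hc])
      · intro l hl
        rcases Nat.lt_or_ge l (m + 1) with h' | h'
        · have c1 : l ≤ m := by omega
          have c2 : t l ≤ K := (hmono m le_rfl l (by omega)).trans_eq htm
          simp only [c1, if_true, c2]
          exact hval l (by omega)
        · have : l = m + 1 := by omega
          subst this
          have c1 : ¬ (m + 1 ≤ m) := by omega
          have c2 : ¬ (K + 1 ≤ K) := by omega
          simp only [c1, if_false, c2]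

lemma mergeKey (n : ℕ) (L K : ℕ → ℕ) (σ τ : ℕ → ℕ → ℕ)
    (hσL : ∀ i, i + 1 < n → σ i (L i) = K i)
    (hσs : ∀ i, i + 1 < n → ∀ l < L i, σ i (l + 1) = σ i l ∨ σ i (l + 1) = σ i l + 1)
    (hτL : ∀ i, i + 1 < n → τ i (L (i + 1)) = K i)
    (hτs : ∀ i, i + 1 < n → ∀ l < L (i + 1), τ i (l + 1) = τ i l ∨ τ i (l + 1) = τ i l + 1)
    (c : ℕ → ℕ)
    (hb : ∀ i < n, c i ≤ L i)
    (hcmp : ∀ i, i + 1 < n → σ i (c i) = τ i (c (i + 1)))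
    (i0 : ℕ) (hi0n : i0 < n) (hi0 : c i0 ≠ L i0) :
    ∃ c' : ℕ → ℕ,
      (∀ i < n, c' i ≤ L i) ∧ (∀ i, i + 1 < n → σ i (c' i) = τ i (c' (i + 1))) ∧
      (∀ i, c' i = c i ∨ (c' i = c i + 1 ∧ c i < L i ∧ i < n)) ∧
      (∃ i < n, c' i = c i + 1 ∧ c i < L i) := by
  classical
  have hσm : ∀ i, i + 1 < n → ∀ u v, u ≤ v → v ≤ L i → σ i u ≤ σ i v :=
    fun i hi u v huv hv => stepMono (hσs i hi) v hv u huv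
  have hτm : ∀ i, i + 1 < n → ∀ u v, u ≤ v → v ≤ L (i + 1) → τ i u ≤ τ i v :=
    fun i hi u v huv hv => stepMono (hτs i hi) v hv u huv
  -- the set of unfinished coordinates whose next step does not change the up-level
  set S : Set ℕ :=
    {i | i < n ∧ c i < L i ∧ ¬(i + 1 < n ∧ σ i (c i + 1) ≠ σ i (c i))} with hS
  have hi0' : c i0 < L i0 := lt_of_le_of_ne (hb i0 hi0n) hi0
  set P1 : ℕ → Prop := fun i => i < n ∧ c i < L i with hP1
  set M : ℕ := Nat.findGreatest P1 n with hMdef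
  have hM : P1 M := Nat.findGreatest_spec (le_of_lt hi0n) ⟨hi0n, hi0'⟩
  have hMS : M ∈ S := by
    refine ⟨hM.1, hM.2, ?_⟩
    rintro ⟨hM1, hMne⟩
    have hng : ¬ P1 (M + 1) :=
      Nat.findGreatest_is_greatest (n := n) (P := P1) (by omega) (by omega)
    have hb1 := hb (M + 1) hM1
    have hc1 : c (M + 1) = L (M + 1) := by
      simp only [hP1] at hng
      omega
    have hstep := hσs M hM1 (c M) hM.2
    have hKeq : σ M (c M) = K M := by rw [hcmp M hM1, hc1, hτL M hM1]
    have hle : σ M (c M + 1) ≤ K M := by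
      have := hσm M hM1 (c M + 1) (L M) (by omega) le_rfl
      rw [hσL M hM1] at this
      exact this
    omega
  set b : ℕ := sInf S with hbdef
  have hbS : b ∈ S := Nat.sInf_mem ⟨M, hMS⟩
  have hbn : b < n := hbS.1
  have hbL : c b < L b := hbS.2.1
  have hforce : ∀ i, i < b → i < n → c i < L i →
      (i + 1 < n ∧ σ i (c i + 1) = σ i (c i) + 1) := by
    intro i h1 h2 h3
    have hni : i ∉ S := Nat.notMem_of_lt_sInf h1
    have hC : i + 1 < n ∧ σ i (c i + 1) ≠ σ i (c i) := by
      by_contra hC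
      exact hni ⟨h2, h3, hC⟩
    refine ⟨hC.1, ?_⟩
    rcases hσs i hC.1 (c i) h3 with h | h
    · exact absurd h hC.2
    · exact h
  set nd : ℕ → Prop :=
    fun i => 1 ≤ i ∧ i < n ∧ c i < L i ∧ τ (i - 1) (c i + 1) ≠ τ (i - 1) (c i) with hndd
  have hnd0 : ¬ nd 0 := fun h => absurd h.1 (by norm_num)
  set a : ℕ := Nat.findGreatest (fun i => ¬ nd i) b with hadef
  have ha : ¬ nd a := Nat.findGreatest_spec (P := fun i => ¬ nd i) (Nat.zero_le b) hnd0
  have hab : a ≤ b := Nat.findGreatest_le (P := fun i => ¬ nd i) b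
  have hnd : ∀ i, a < i → i ≤ b → nd i :=
    fun i h1 h2 => not_not.mp (Nat.findGreatest_is_greatest (P := fun i => ¬ nd i) (n := b) h1 h2)
  have hunf : ∀ i, a ≤ i → i ≤ b → i < n ∧ c i < L i := by
    intro i h1 h2
    rcases eq_or_lt_of_le h2 with h2' | h2'
    · rw [h2']; exact ⟨hbn, hbL⟩
    · obtain ⟨-, hin, hcl, hτne⟩ := hnd (i + 1) (by omega) (by omega)
      simp only [Nat.add_sub_cancel] at hτne
      have hi1n : i + 1 < n := hin
      have hτstep := hτs i hi1n (c (i + 1)) hcl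
      have h5 : τ i (c (i + 1) + 1) ≤ K i := by
        have := hτm i hi1n (c (i + 1) + 1) (L (i + 1)) (by omega) le_rfl
        rw [hτL i hi1n] at this
        exact this
      have h6 := hcmp i hi1n
      have h7 : c i ≤ L i := hb i (by omega)
      refine ⟨by omega, ?_⟩
      rcases Nat.lt_or_ge (c i) (L i) with h8 | h8
      · exact h8
      · exfalso
        have h9 : c i = L i := by omega
        rw [h9, hσL i hi1n] at h6
        omega
  refine ⟨fun i => if a ≤ i ∧ i ≤ b then c i + 1 else c i, ?_, ?_, ?_, ?_⟩
  · intro i hi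
    show (if a ≤ i ∧ i ≤ b then c i + 1 else c i) ≤ L i
    by_cases h : a ≤ i ∧ i ≤ b
    · have e : (if a ≤ i ∧ i ≤ b then c i + 1 else c i) = c i + 1 := if_pos h
      rw [e]
      exact (hunf i h.1 h.2).2
    · have e : (if a ≤ i ∧ i ≤ b then c i + 1 else c i) = c i := if_neg h
      rw [e]
      exact hb i hi
  · intro i hi1
    show σ i (if a ≤ i ∧ i ≤ b then c i + 1 else c i)
        = τ i (if a ≤ i + 1 ∧ i + 1 ≤ b then c (i + 1) + 1 else c (i + 1))
    by_cases h1 : a ≤ i ∧ i ≤ b <;> by_cases h2 : a ≤ i + 1 ∧ i + 1 ≤ b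
    · rw [if_pos h1, if_pos h2]
      have hib : i < b := by omega
      have hσe := (hforce i hib (by omega) (hunf i h1.1 h1.2).2).2
      obtain ⟨-, -, hcl, hτne⟩ := hnd (i + 1) (by omega) h2.2
      simp only [Nat.add_sub_cancel] at hτne
      have hτe : τ i (c (i + 1) + 1) = τ i (c (i + 1)) + 1 := by
        rcases hτs i hi1 (c (i + 1)) hcl with h | h
        · exact absurd h hτne
        · exact h
      rw [hσe, hτe, hcmp i hi1]
    · rw [if_pos h1, if_neg h2]
      have hib : i = b := by omega
      have hse : σ i (c i + 1) = σ i (c i) := by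
        by_contra hne
        exact hbS.2.2 ⟨hib ▸ hi1, hib ▸ hne⟩
      rw [hse]
      exact hcmp i hi1
    · rw [if_neg h1, if_pos h2]
      have hia : a = i + 1 := by omega
      have hte : τ i (c (i + 1) + 1) = τ i (c (i + 1)) := by
        by_contra hne
        refine ha ⟨by omega, by omega, (hunf a le_rfl hab).2, ?_⟩
        rw [hia]
        simpa using hne
      rw [hte]
      exact hcmp i hi1
    · rw [if_neg h1, if_neg h2]
      exact hcmp i hi1
  · intro i
    by_cases h : a ≤ i ∧ i ≤ b
    · right
      have e : (if a ≤ i ∧ i ≤ b then c i + 1 else c i) = c i + 1 := if_pos h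
      exact ⟨e, (hunf i h.1 h.2).2, (hunf i h.1 h.2).1⟩
    · left
      exact if_neg h
  · refine ⟨b, hbn, ?_, hbL⟩
    exact if_pos ⟨hab, le_rfl⟩

lemma merge_exists (n : ℕ) (L K : ℕ → ℕ) (σ τ : ℕ → ℕ → ℕ)
    (hσ0 : ∀ i, i + 1 < n → σ i 0 = 0)
    (hσL : ∀ i, i + 1 < n → σ i (L i) = K i)
    (hσs : ∀ i, i + 1 < n → ∀ l < L i, σ i (l + 1) = σ i l ∨ σ i (l + 1) = σ i l + 1)
    (hτ0 : ∀ i, i + 1 < n → τ i 0 = 0)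
    (hτL : ∀ i, i + 1 < n → τ i (L (i + 1)) = K i)
    (hτs : ∀ i, i + 1 < n → ∀ l < L (i + 1), τ i (l + 1) = τ i l ∨ τ i (l + 1) = τ i l + 1) :
    ∃ (m : ℕ) (cs : ℕ → ℕ → ℕ),
      (∀ i, cs 0 i = 0) ∧ (∀ i < n, cs m i = L i) ∧
      (∀ l < m, ∀ i, cs (l + 1) i = cs l i ∨
        (cs (l + 1) i = cs l i + 1 ∧ cs l i < L i ∧ i < n)) ∧
      (∀ l < m, ∃ i < n, cs (l + 1) i = cs l i + 1 ∧ cs l i < L i) ∧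
      (∀ l ≤ m, ∀ i < n, cs l i ≤ L i) ∧
      (∀ l ≤ m, ∀ i, i + 1 < n → σ i (cs l i) = τ i (cs l (i + 1))) := by
  classical
  have main : ∀ N (c : ℕ → ℕ), (∀ i < n, c i ≤ L i) →
      (∀ i, i + 1 < n → σ i (c i) = τ i (c (i + 1))) →
      (∑ i ∈ Finset.range n, (L i - c i)) ≤ N →
      ∃ (m : ℕ) (cs : ℕ → ℕ → ℕ),
        (∀ i, cs 0 i = c i) ∧ (∀ i < n, cs m i = L i) ∧
        (∀ l < m, ∀ i, cs (l + 1) i = cs l i ∨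
          (cs (l + 1) i = cs l i + 1 ∧ cs l i < L i ∧ i < n)) ∧
        (∀ l < m, ∃ i < n, cs (l + 1) i = cs l i + 1 ∧ cs l i < L i) ∧
        (∀ l ≤ m, ∀ i < n, cs l i ≤ L i) ∧
        (∀ l ≤ m, ∀ i, i + 1 < n → σ i (cs l i) = τ i (cs l (i + 1))) := by
    intro N
    induction N with
    | zero =>
      intro c hcb hccmp hmeas
      have hf : ∀ i < n, c i = L i := by
        intro i hi
        have h0 : ∑ i ∈ Finset.range n, (L i - c i) = 0 := by omega
        have := (Finset.sum_eq_zero_iff.mp h0) i (Finset.mem_range.mpr hi)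
        have := hcb i hi
        omega
      exact ⟨0, fun _ => c, fun i => rfl, hf, by omega, by omega,
        fun l _ i hi => hcb i hi, fun l _ i hi => hccmp i hi⟩
    | succ N ih =>
      intro c hcb hccmp hmeas
      by_cases hf : ∀ i < n, c i = L i
      · exact ⟨0, fun _ => c, fun i => rfl, hf, by omega, by omega,
          fun l _ i hi => hcb i hi, fun l _ i hi => hccmp i hi⟩
      · push_neg at hf
        obtain ⟨i0, hi0n, hi0⟩ := hf
        obtain ⟨c', hb', hcmp', hstep', i1, hi1n, hi1e, hi1l⟩ :=
          mergeKey n L K σ τ hσL hσs hτL hτs c hcb hccmp i0 hi0n hi0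
        have hmeas' : (∑ i ∈ Finset.range n, (L i - c' i)) ≤ N := by
          have hlt : (∑ i ∈ Finset.range n, (L i - c' i))
              < ∑ i ∈ Finset.range n, (L i - c i) := by
            apply Finset.sum_lt_sum
            · intro i _
              rcases hstep' i with h | ⟨h1, h2, h3⟩ <;> omega
            · exact ⟨i1, Finset.mem_range.mpr hi1n, by omega⟩
          omega
        obtain ⟨m, cs, hcs0, hcsm, hcsstep, hcswit, hcsb, hcscmp⟩ := ih c' hb' hcmp' hmeas'
        refine ⟨m + 1, fun l => if l = 0 then c else cs (l - 1), fun i => rfl, ?_, ?_, ?_, ?_, ?_⟩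
        · intro i hi
          show (if m + 1 = 0 then c else cs (m + 1 - 1)) i = L i
          rw [if_neg (by omega)]
          simpa using hcsm i hi
        · intro l hl i
          rcases Nat.eq_zero_or_pos l with rfl | hlp
          · show (if 0 + 1 = 0 then c else cs (0 + 1 - 1)) i = (if (0:ℕ) = 0 then c else cs (0 - 1)) i ∨
                ((if 0 + 1 = 0 then c else cs (0 + 1 - 1)) i = (if (0:ℕ) = 0 then c else cs (0 - 1)) i + 1 ∧
                  (if (0:ℕ) = 0 then c else cs (0 - 1)) i < L i ∧ i < n)
            rw [if_neg (by omega), if_pos rfl]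
            have e0 : (0:ℕ) + 1 - 1 = 0 := rfl
            rw [e0, hcs0 i]
            rcases hstep' i with h | ⟨h1, h2, h3⟩
            · left; exact h
            · right; exact ⟨h1, h2, h3⟩
          · show (if l + 1 = 0 then c else cs (l + 1 - 1)) i = (if l = 0 then c else cs (l - 1)) i ∨
                ((if l + 1 = 0 then c else cs (l + 1 - 1)) i = (if l = 0 then c else cs (l - 1)) i + 1 ∧
                  (if l = 0 then c else cs (l - 1)) i < L i ∧ i < n)
            rw [if_neg (by omega : ¬ (l + 1 = 0)), if_neg (by omega : ¬ (l = 0))]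
            have e1 : l + 1 - 1 = (l - 1) + 1 := by omega
            rw [e1]
            exact hcsstep (l - 1) (by omega) i
        · intro l hl
          rcases Nat.eq_zero_or_pos l with rfl | hlp
          · refine ⟨i1, hi1n, ?_, ?_⟩
            · show (if 0 + 1 = 0 then c else cs (0 + 1 - 1)) i1
                = (if (0:ℕ) = 0 then c else cs (0 - 1)) i1 + 1
              rw [if_neg (by omega), if_pos rfl]
              simpa [hcs0 i1] using hi1e
            · show (if (0:ℕ) = 0 then c else cs (0 - 1)) i1 < L i1
              rw [if_pos rfl]
              exact hi1l
          · obtain ⟨i2, hi2n, hi2e, hi2l⟩ := hcswit (l - 1) (by omega)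
            refine ⟨i2, hi2n, ?_, ?_⟩
            · show (if l + 1 = 0 then c else cs (l + 1 - 1)) i2
                = (if l = 0 then c else cs (l - 1)) i2 + 1
              rw [if_neg (by omega), if_neg (by omega)]
              have e1 : l + 1 - 1 = (l - 1) + 1 := by omega
              rw [e1]
              exact hi2e
            · show (if l = 0 then c else cs (l - 1)) i2 < L i2
              rw [if_neg (by omega)]
              exact hi2l
        · intro l hl i hi
          show (if l = 0 then c else cs (l - 1)) i ≤ L i
          rcases Nat.eq_zero_or_pos l with rfl | hlp
          · rw [if_pos rfl]; exact hcb i hi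
          · rw [if_neg (by omega)]
            exact hcsb (l - 1) (by omega) i hi
        · intro l hl i hi
          show σ i ((if l = 0 then c else cs (l - 1)) i)
              = τ i ((if l = 0 then c else cs (l - 1)) (i + 1))
          rcases Nat.eq_zero_or_pos l with rfl | hlp
          · rw [if_pos rfl]; exact hccmp i hi
          · rw [if_neg (by omega)]
            exact hcscmp (l - 1) (by omega) i hi
  obtain ⟨m, cs, hcs0, h2, h3, h4, h5, h6⟩ :=
    main (∑ i ∈ Finset.range n, L i) (fun _ => 0) (fun i _ => Nat.zero_le _)
      (fun i hi => by rw [hσ0 i hi, hτ0 i hi]) (by simp)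
  exact ⟨m, cs, fun i => hcs0 i, h2, h3, h4, h5, h6⟩

end Helpers



/-- A path graph: the vertices can be enumerated bijectively as `w 0, ..., w k` so that
the edges are exactly the pairs of consecutive vertices. -/
def IsPathGraph {V : Type*} (G : SimpleGraph V) : Prop :=
  ∃ (k : ℕ) (w : Fin (k + 1) → V), Function.Bijective w ∧
    ∀ a b : Fin (k + 1), G.Adj (w a) (w b) ↔ (a.1 + 1 = b.1 ∨ b.1 + 1 = a.1)

/-- A cycle graph: a connected graph in which every vertex has exactly two neighbors. -/
def IsCycleGraph {V : Type*} (G : SimpleGraph V) : Prop :=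
  G.Connected ∧ ∀ v : V, (G.neighborSet v).ncard = 2

/-- Proposition: given a zig-zag diagram
`G_{0,1} → G_1 ← G_{1,2} → G_2 ← ⋯ → G_{n-1} ← G_{n-1,n}` of graphs (each a path graph
or a cycle graph) and simplicial maps, with a walk `P_i` in each `G_{i-1,i}` from `x_i`
to `y_i` traversing each edge exactly once and with compatible images
`α_i(P_i) = β_i(P_{i+1})`, there is a walk in the inverse limit graph from the node
`(x_1, ..., x_n)` to the node `(y_1, ..., y_n)` projecting to each `P_i`.
Here `VE i` is the node set of `G_{i,i+1}` (for `0 ≤ i < n`), `VM i` that of `G_i`,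
`dn i : VE i → VM i` is `β_i` and `up i : VE i → VM (i+1)` is `α_{i+1}`. -/
theorem inverse_limit_walk (n : ℕ) (hn : 1 ≤ n)
    (VE : ℕ → Type*) (VM : ℕ → Type*) [∀ i, DecidableEq (VE i)] [∀ i, DecidableEq (VM i)]
    (GE : ∀ i, SimpleGraph (VE i)) (GM : ∀ i, SimpleGraph (VM i))
    (up : ∀ i, VE i → VM (i + 1)) (dn : ∀ i, VE i → VM i)
    (hup : ∀ i, SimplicialMap (GE i) (GM (i + 1)) (up i))
    (hdn : ∀ i, SimplicialMap (GE i) (GM i) (dn i))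
    (hshapeE : ∀ i < n, IsPathGraph (GE i) ∨ IsCycleGraph (GE i))
    (hshapeM : ∀ i, 1 ≤ i → i < n → IsPathGraph (GM i) ∨ IsCycleGraph (GM i))
    (x y : ∀ i, VE i)
    (hcompx : ∀ i, i + 1 < n → up i (x i) = dn (i + 1) (x (i + 1)))
    (hcompy : ∀ i, i + 1 < n → up i (y i) = dn (i + 1) (y (i + 1)))
    (L : ℕ → ℕ) (p : ∀ i, ℕ → VE i)
    (hp0 : ∀ i < n, p i 0 = x i) (hpL : ∀ i < n, p i (L i) = y i)
    (hadj : ∀ i < n, ∀ l < L i, (GE i).Adj (p i l) (p i (l + 1)))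
    (heuler : ∀ i < n, ∀ e ∈ (GE i).edgeSet,
      ∃! l : ℕ, l < L i ∧ s(p i l, p i (l + 1)) = e)
    (hglue : ∀ i, i + 1 < n →
      (List.ofFn fun l : Fin (L i + 1) => up i (p i l)).destutter (· ≠ ·)
        = (List.ofFn fun l : Fin (L (i + 1) + 1) => dn (i + 1) (p (i + 1) l)).destutter
            (· ≠ ·)) :
    ∃ (m : ℕ) (w : ℕ → ∀ i, VE i),
      w 0 = x ∧ w m = y ∧
      (∀ l ≤ m, ∀ i, i + 1 < n → up i (w l i) = dn (i + 1) (w l (i + 1))) ∧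
      (∀ l < m, w l ≠ w (l + 1) ∧
        ∀ i < n, w l i = w (l + 1) i ∨ (GE i).Adj (w l i) (w (l + 1) i)) ∧
      ∀ i < n, (List.ofFn fun l : Fin (m + 1) => w l i).destutter (· ≠ ·)
        = List.ofFn fun l : Fin (L i + 1) => p i l := by
  classical
  by_cases hLz : ∀ i < n, L i = 0
  · have hxyn : ∀ i < n, x i = y i := by
      intro i hi
      rw [← hp0 i hi, ← hpL i hi, hLz i hi]
    by_cases hxy : x = y
    · refine ⟨0, fun _ => x, rfl, hxy ▸ rfl, ?_, ?_, ?_⟩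
      · intro l _ i hi; exact hcompx i hi
      · intro l hl; exact absurd hl (by omega)
      · intro i hi
        have hL0 : L i = 0 := hLz i hi
        simp only [hL0]
        simp [List.ofFn_succ, hp0 i hi]
    · refine ⟨1, fun l => if l = 0 then x else y, by simp, by simp, ?_, ?_, ?_⟩
      · intro l hl i hi
        rcases Nat.le_one_iff_eq_zero_or_eq_one.mp hl with rfl | rfl
        · simp only [if_pos rfl]; exact hcompx i hi
        · simp only [if_neg one_ne_zero]; exact hcompy i hi
      · intro l hl
        have hl0 : l = 0 := by omega
        subst hl0
        constructor
        · simp only [if_pos rfl, if_neg one_ne_zero]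
          exact hxy
        · intro i hi
          left
          simp only [if_pos rfl, if_neg one_ne_zero]
          exact hxyn i hi
      · intro i hi
        have hL0 : L i = 0 := hLz i hi
        simp only [hL0]
        have hxyi := hxyn i hi
        simp [List.ofFn_succ, hxyi, hp0 i hi]
  · push_neg at hLz
    obtain ⟨iW, hiWn, hiWL⟩ := hLz
    have HP : ∀ i : ℕ, ∃ (Ki : ℕ) (σi τi : ℕ → ℕ) (Qi : ℕ → VM (i + 1)),
        i + 1 < n →
        (σi 0 = 0 ∧ σi (L i) = Ki ∧
          (∀ l < L i, σi (l + 1) = σi l ∨ σi (l + 1) = σi l + 1) ∧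
          τi 0 = 0 ∧ τi (L (i + 1)) = Ki ∧
          (∀ l < L (i + 1), τi (l + 1) = τi l ∨ τi (l + 1) = τi l + 1) ∧
          (∀ l ≤ L i, up i (p i l) = Qi (σi l)) ∧
          (∀ l ≤ L (i + 1), dn (i + 1) (p (i + 1) l) = Qi (τi l))) := by
      intro i
      by_cases hi : i + 1 < n
      · obtain ⟨K1, g1, t1, ht10, ht1m, ht1s, hg1, hv1⟩ :=
          exists_param (fun l => up i (p i l)) (L i)
        obtain ⟨K2, g2, t2, ht20, ht2m, ht2s, hg2, hv2⟩ :=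
          exists_param (fun l => dn (i + 1) (p (i + 1) l)) (L (i + 1))
        have d1 : (List.ofFn fun l : Fin (L i + 1) => up i (p i ↑l)).destutter (· ≠ ·)
            = List.ofFn fun j : Fin (K1 + 1) => g1 ↑j := by
          have e : (fun l : Fin (L i + 1) => up i (p i ↑l))
              = fun l : Fin (L i + 1) => g1 (0 + t1 ↑l) := by
            funext l
            rw [hv1 ↑l (Nat.lt_succ_iff.mp l.isLt), Nat.zero_add]
          rw [e]
          have hd := destutter_ofFn g1 (L i) t1 0 ht10 ht1s
            (by
              intro j hj
              rw [ht1m] at hj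
              simpa using hg1 j hj)
          rw [hd]
          simp only [ht1m, Nat.zero_add]
          exact List.ofFn_inj.mpr (funext fun j => by rw [Fin.coe_cast])
        have d2 : (List.ofFn fun l : Fin (L (i + 1) + 1) => dn (i + 1) (p (i + 1) ↑l)).destutter (· ≠ ·)
            = List.ofFn fun j : Fin (K2 + 1) => g2 ↑j := by
          have e : (fun l : Fin (L (i + 1) + 1) => dn (i + 1) (p (i + 1) ↑l))
              = fun l : Fin (L (i + 1) + 1) => g2 (0 + t2 ↑l) := by
            funext l
            rw [hv2 ↑l (Nat.lt_succ_iff.mp l.isLt), Nat.zero_add]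
          rw [e]
          have hd := destutter_ofFn g2 (L (i + 1)) t2 0 ht20 ht2s
            (by
              intro j hj
              rw [ht2m] at hj
              simpa using hg2 j hj)
          rw [hd]
          simp only [ht2m, Nat.zero_add]
          exact List.ofFn_inj.mpr (funext fun j => by rw [Fin.coe_cast])
        have dd := hglue i hi
        rw [d1, d2] at dd
        have hK : K1 = K2 := by
          have := congrArg List.length dd
          simpa using this
        subst hK
        have hgg : ∀ j : Fin (K1 + 1), g1 ↑j = g2 ↑j := by
          have h9 := List.ofFn_inj.mp dd
          intro j
          exact congrFun h9 j
        refine ⟨K1, t1, t2, g1, fun _ => ⟨ht10, ht1m, ht1s, ht20, ht2m, ht2s, ?_, ?_⟩⟩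
        · intro l hl; exact hv1 l hl
        · intro l hl
          rw [hv2 l hl]
          have hb2 : t2 l ≤ K1 := by
            have := stepMono ht2s (L (i + 1)) le_rfl l hl
            omega
          exact (hgg ⟨t2 l, by omega⟩).symm
      · exact ⟨0, fun _ => 0, fun _ => 0, fun _ => up i (p i 0), fun h => absurd h hi⟩
    choose Kf σf τf Qf hPf using HP
    obtain ⟨m, cs, hc0, hcm, hstep, hwit, hbnd, hcmp⟩ :=
      merge_exists n L Kf σf τf
        (fun i hi => (hPf i hi).1) (fun i hi => (hPf i hi).2.1)
        (fun i hi => (hPf i hi).2.2.1) (fun i hi => (hPf i hi).2.2.2.1)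
        (fun i hi => (hPf i hi).2.2.2.2.1) (fun i hi => (hPf i hi).2.2.2.2.2.1)
    have hm0 : m ≠ 0 := by
      intro h
      subst h
      exact hiWL (by rw [← hcm iW hiWn, hc0 iW])
    refine ⟨m, fun l i => if h : i < n then p i (cs l i) else (if l = 0 then x i else y i),
      ?_, ?_, ?_, ?_, ?_⟩
    · funext i
      by_cases h : i < n
      · simp only [dif_pos h, hc0 i]
        exact hp0 i h
      · simp [dif_neg h]
    · funext i
      by_cases h : i < n
      · simp only [dif_pos h, hcm i h]
        exact hpL i h
      · simp only [dif_neg h, if_neg hm0]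
    · intro l hl i hi
      simp only [dif_pos (show i < n by omega), dif_pos (show i + 1 < n from hi)]
      have h7 := (hPf i hi).2.2.2.2.2.2.1 (cs l i) (hbnd l hl i (by omega))
      have h8 := (hPf i hi).2.2.2.2.2.2.2 (cs l (i + 1)) (hbnd l hl (i + 1) hi)
      rw [h7, h8, hcmp l hl i hi]
    · intro l hl
      constructor
      · obtain ⟨i, hin, he, hlt⟩ := hwit l hl
        intro hcon
        have hco := congrFun hcon i
        simp only [dif_pos hin] at hco
        rw [he] at hco
        exact (hadj i hin (cs l i) hlt).ne hco
      · intro i hin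
        simp only [dif_pos hin]
        rcases hstep l hl i with h | ⟨h1, h2, -⟩
        · left
          rw [h]
        · right
          rw [h1]
          exact hadj i hin (cs l i) h2
    · intro i hin
      have e : (fun l : Fin (m + 1) =>
            (fun (l : ℕ) (i : ℕ) => if h : i < n then p i (cs l i)
              else (if l = 0 then x i else y i)) ↑l i)
          = fun l : Fin (m + 1) => p i (0 + cs ↑l i) := by
        funext l
        show (if h : i < n then p i (cs ↑l i) else (if (↑l : ℕ) = 0 then x i else y i))
            = p i (0 + cs ↑l i)
        rw [dif_pos hin, Nat.zero_add]
      rw [e]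
      have hd := destutter_ofFn (p i) m (fun l => cs l i) 0 (hc0 i)
        (fun l hl => by
          rcases hstep l hl i with h | ⟨h1, -, -⟩
          · left; exact h
          · right; exact h1)
        (by
          intro j hj
          have hj' : j < L i := by rw [← hcm i hin]; exact hj
          simpa using (hadj i hin j hj').ne)
      rw [hd]
      have hL : cs m i = L i := hcm i hin
      simp only [hL, Nat.zero_add]
      exact List.ofFn_inj.mpr (funext fun j => by rw [Fin.coe_cast])
end
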